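/- arXiv:0812.3025 — 4 statements merged into one kernel-verified Lean document; each statement's English description precedes it below -/
import Mathlib

section
/- Let λ : ℕ → ℝ be a multiplicative function, p' a prime with λ(p') < 0, and A a set of positive integers coprime to p' of positive lower density δ > 0 such that λ(a) ≠ 0 for all a ∈ A. Then the sets {n : λ(n) > 0} and {n : λ(n) < 0} each have lower density at least δ/p'. -/
open Classical in
theorem lower_density_of_same_sign (lam : ℕ → ℝ) (hone : lam 1 = 1)
    (hmul : ∀ m n : ℕ, Nat.Coprime m n → lam (m * n) = lam m * lam n)
    (p' : ℕ) (hp : p'.Prime) (hneg : lam p' < 0)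
    (A : Set ℕ) (hApos : ∀ a ∈ A, 0 < a ∧ Nat.Coprime a p')
    (hAne : ∀ a ∈ A, lam a ≠ 0)
    (δ : ℝ) (hδ : 0 < δ)
    (hdens : δ ≤ Filter.liminf (fun x : ℕ =>
        (((Finset.Icc 1 x).filter (fun n => n ∈ A)).card : ℝ) / (x : ℝ)) Filter.atTop) :
    δ / (p' : ℝ) ≤ Filter.liminf (fun x : ℕ =>
        (((Finset.Icc 1 x).filter (fun n => 0 < lam n)).card : ℝ) / (x : ℝ)) Filter.atTop ∧
    δ / (p' : ℝ) ≤ Filter.liminf (fun x : ℕ =>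
        (((Finset.Icc 1 x).filter (fun n => lam n < 0)).card : ℝ) / (x : ℝ)) Filter.atTop := by
  classical
  have hp0 : 0 < p' := hp.pos
  have hp2 : 2 ≤ p' := hp.two_le
  have hpR : (2:ℝ) ≤ (p' : ℝ) := by exact_mod_cast hp2
  -- counting lemma
  have count : ∀ (Q : ℕ → Prop), (∀ a ∈ A, Q a ∨ Q (p' * a)) → ∀ y : ℕ,
      ((Finset.Icc 1 (y / p')).filter (fun n => n ∈ A)).card ≤
      ((Finset.Icc 1 y).filter (fun n => Q n)).card := by
    intro Q hQ y
    apply Finset.card_le_card_of_injOn (fun a => if Q a then a else p' * a)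
    · intro a ha
      simp only [Finset.mem_coe, Finset.mem_filter, Finset.mem_Icc] at ha ⊢
      obtain ⟨⟨h1, h2⟩, hA⟩ := ha
      have hmulle : p' * a ≤ y := by
        rw [mul_comm]
        exact (Nat.le_div_iff_mul_le hp0).1 h2
      by_cases hqa : Q a
      · rw [if_pos hqa]
        refine ⟨⟨h1, ?_⟩, hqa⟩
        have : a ≤ p' * a := Nat.le_mul_of_pos_left a hp0
        omega
      · rw [if_neg hqa]
        refine ⟨⟨by nlinarith, hmulle⟩, ?_⟩
        rcases hQ a hA with h | h
        · exact absurd h hqa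
        · exact h
    · intro a ha b hb hab
      simp only [Finset.coe_filter, Set.mem_setOf_eq, Finset.mem_Icc] at ha hb
      have hca : Nat.Coprime a p' := (hApos a ha.2).2
      have hcb : Nat.Coprime b p' := (hApos b hb.2).2
      have hnda : ¬ (p' ∣ a) := by
        intro hd
        have h1 : p' ∣ 1 := hca ▸ Nat.dvd_gcd hd dvd_rfl
        have := Nat.dvd_one.mp h1
        omega
      have hndb : ¬ (p' ∣ b) := by
        intro hd
        have h1 : p' ∣ 1 := hcb ▸ Nat.dvd_gcd hd dvd_rfl
        have := Nat.dvd_one.mp h1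
        omega
      simp only at hab
      by_cases hqa : Q a <;> by_cases hqb : Q b <;>
        simp only [hqa, hqb, if_true, if_false] at hab
      · exact hab
      · exact absurd (hab ▸ Dvd.intro b rfl) hnda
      · exact absurd (hab.symm ▸ Dvd.intro a rfl) hndb
      · exact Nat.eq_of_mul_eq_mul_left hp0 hab
  -- analytic lemma
  have main : ∀ (Q : ℕ → Prop), (∀ a ∈ A, Q a ∨ Q (p' * a)) →
      δ / (p' : ℝ) ≤ Filter.liminf (fun y : ℕ =>
        (((Finset.Icc 1 y).filter (fun n => Q n)).card : ℝ) / (y : ℝ)) Filter.atTop := by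
    intro Q hQ
    set v : ℕ → ℝ := fun y : ℕ =>
      (((Finset.Icc 1 y).filter (fun n => Q n)).card : ℝ) / (y : ℝ) with hv
    have hv0 : ∀ y, 0 ≤ v y := fun y => by positivity
    have hv1 : ∀ y, v y ≤ 1 := by
      intro y
      rcases Nat.eq_zero_or_pos y with h | h
      · simp [hv, h]
      · have hcard : (((Finset.Icc 1 y).filter (fun n => Q n)).card : ℝ) ≤ y := by
          have := Finset.card_filter_le (Finset.Icc 1 y) (fun n => Q n)
          have h2 : (Finset.Icc 1 y).card = y := by
            rw [Nat.card_Icc]; omega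
          exact_mod_cast this.trans_eq h2
        rw [hv, div_le_one (by exact_mod_cast h)]
        exact hcard
    have hcob : Filter.IsCoboundedUnder (· ≥ ·) Filter.atTop v :=
      Filter.isCoboundedUnder_ge_of_le _ hv1
    apply le_of_forall_pos_le_add
    intro ε hε
    have : δ / (p' : ℝ) - ε ≤ Filter.liminf v Filter.atTop := by
      set ε' := ε * p' / 2 with hε'def
      have hε' : 0 < ε' := by positivity
      -- eventual lower bound on density of A
      have hbddA : Filter.IsBoundedUnder (· ≥ ·) Filter.atTop (fun x : ℕ =>
          (((Finset.Icc 1 x).filter (fun n => n ∈ A)).card : ℝ) / (x : ℝ)) :=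
        Filter.isBoundedUnder_of ⟨0, fun x => by positivity⟩
      have hu : ∀ᶠ x in Filter.atTop, δ - ε' <
          (((Finset.Icc 1 x).filter (fun n => n ∈ A)).card : ℝ) / (x : ℝ) :=
        Filter.eventually_lt_of_lt_liminf (lt_of_lt_of_le (by linarith) hdens) hbddA
      obtain ⟨N, hN⟩ := Filter.eventually_atTop.1 hu
      set K := ⌈δ / ε'⌉₊ + N + 1 with hK
      apply Filter.le_liminf_of_le hcob
      rw [Filter.eventually_atTop]
      refine ⟨p' * K, fun y hy => ?_⟩
      set x := y / p' with hx
      have hy' : K * p' ≤ y := by rw [mul_comm]; exact hy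
      have hxK : K ≤ x := (Nat.le_div_iff_mul_le hp0).2 hy'
      have hxN : N ≤ x := by omega
      have hx1 : 1 ≤ x := by omega
      have hy1 : 0 < y := by
        have : 1 * 2 ≤ K * p' := Nat.mul_le_mul (by omega) hp2
        omega
      have hxR : (0:ℝ) < (x:ℝ) := by exact_mod_cast hx1
      have hyR : (0:ℝ) < (y:ℝ) := by exact_mod_cast hy1
      -- cardA x lower bound
      have hcard : (δ - ε') * (x:ℝ) ≤
          (((Finset.Icc 1 x).filter (fun n => n ∈ A)).card : ℝ) := by
        have h := hN x hxN
        rw [lt_div_iff₀ hxR] at h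
        linarith
      have hcc : ((((Finset.Icc 1 x).filter (fun n => n ∈ A)).card : ℝ)) ≤
          (((Finset.Icc 1 y).filter (fun n => Q n)).card : ℝ) := by
        exact_mod_cast count Q hQ y
      -- y < p' * (x + 1)
      have hyx : (y:ℝ) < (p':ℝ) * ((x:ℝ) + 1) := by
        have h : y < (x + 1) * p' := by
          rw [← Nat.div_lt_iff_lt_mul hp0]
          omega
        have h' : (y:ℝ) < ((x:ℝ) + 1) * (p':ℝ) := by exact_mod_cast h
        linarith
      have hyge : (p':ℝ) * (x:ℝ) ≤ (y:ℝ) := by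
        have h : p' * x ≤ y := by rw [mul_comm]; exact Nat.div_mul_le_self y p'
        exact_mod_cast h
      have hKδ : δ / ε' ≤ (x:ℝ) := by
        have h1 : δ / ε' ≤ (⌈δ / ε'⌉₊ : ℝ) := Nat.le_ceil _
        have h2 : (⌈δ / ε'⌉₊ : ℝ) ≤ (x:ℝ) := by
          have : ⌈δ / ε'⌉₊ ≤ x := by omega
          exact_mod_cast this
        linarith
      have hεx : δ ≤ ε' * (x:ℝ) := by
        rw [div_le_iff₀ hε'] at hKδ
        linarith
      -- target: (δ - 2ε')/p' * y ≤ (δ - ε') * x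
      have h1 : (δ - 2*ε') * (y:ℝ) ≤ (δ - ε') * (x:ℝ) * (p':ℝ) := by
        rcases le_or_gt 0 (δ - 2*ε') with h | h
        · nlinarith
        · nlinarith
      have hstep : δ / (p':ℝ) - ε ≤ v y := by
        have hpR0 : (0:ℝ) < (p':ℝ) := by linarith
        have h2 : (δ - 2*ε') / (p':ℝ) * (y:ℝ) ≤
            (((Finset.Icc 1 y).filter (fun n => Q n)).card : ℝ) := by
          have := h1
          calc (δ - 2*ε') / (p':ℝ) * (y:ℝ) = (δ - 2*ε') * (y:ℝ) / (p':ℝ) := by ring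
          _ ≤ (δ - ε') * (x:ℝ) := by rw [div_le_iff₀ hpR0]; linarith
          _ ≤ _ := hcard.trans hcc
        have h3 : (δ - 2*ε') / (p':ℝ) ≤ v y := by
          rw [hv]
          rw [le_div_iff₀ hyR]
          exact h2
        have h4 : δ / (p':ℝ) - ε = (δ - 2*ε') / (p':ℝ) := by
          field_simp [hε'def]
          ring
        linarith
      exact hstep
    linarith
  constructor
  · apply main
    intro a ha
    rcases (hAne a ha).lt_or_gt with h | h
    · right
      rw [hmul p' a (Nat.Coprime.symm (hApos a ha).2)]
      exact mul_pos_of_neg_of_neg hneg h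
    · left; exact h
  · apply main
    intro a ha
    rcases (hAne a ha).lt_or_gt with h | h
    · left; exact h
    · right
      rw [hmul p' a (Nat.Coprime.symm (hApos a ha).2)]
      exact mul_neg_of_neg_of_pos hneg h
end

section
/- Let f ∈ H*_k(N) be a primitive holomorphic cusp form of even weight k ≥ 2 and squarefree level N with Hecke eigenvalues λ_f(n). Then there exists a constant c > 0 (depending on f) and x₀ such that for all x ≥ x₀, #{n ≤ x : gcd(n,N)=1, λ_f(n) > 0} ≥ c·x and #{n ≤ x : gcd(n,N)=1, λ_f(n) < 0} ≥ c·x. -/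
/-- An abstraction of a primitive holomorphic cusp form (newform) of weight `k` and
level `N`, recording the standard properties of its normalized Hecke eigenvalues:
normalization, multiplicativity, Deligne's bound, the Atkin–Lehner relations at
primes dividing the level, Serre's zero-density estimate on `λ(p) = 0`, and the
existence of a prime `p ∤ N` with `λ(p) < 0`. -/
structure PrimitiveForm (k N : ℕ) : Type where
  lam : ℕ → ℝ
  lam_one : lam 1 = 1
  mult : ∀ m n : ℕ, Nat.Coprime m n → lam (m * n) = lam m * lam n
  deligne : ∀ n : ℕ, 0 < n → |lam n| ≤ (n.divisors.card : ℝ)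
  level_pow : ∀ p : ℕ, p.Prime → p ∣ N → ∀ ν : ℕ, lam (p ^ ν) = (lam p) ^ ν
  level_sq : ∀ p : ℕ, p.Prime → p ∣ N → (lam p) ^ 2 = 1 / (p : ℝ)
  serre : ∀ δ : ℝ, δ < 1 / 2 → ∃ Cf > (0 : ℝ), ∀ x : ℕ, 2 ≤ x →
      (((Finset.Icc 1 x).filter (fun p => p.Prime ∧ lam p = 0)).card : ℝ)
        ≤ Cf * (x : ℝ) / (Real.log x) ^ ((1 : ℝ) + δ)
  exists_neg : ∃ p : ℕ, p.Prime ∧ ¬ p ∣ N ∧ lam p < 0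


open Finset

private lemma telescope_aux : ∀ M : ℕ, 3 ≤ M → ∑ k ∈ Finset.Icc 4 M, (1:ℝ)/(k:ℝ)^2 ≤ 1/3 - 1/(M:ℝ) := by
  intro M hM
  induction M, hM using Nat.le_induction with
  | base => norm_num
  | succ M hM ih =>
    rw [Finset.sum_Icc_succ_top (by omega)]
    have hm : (3:ℝ) ≤ (M:ℝ) := by exact_mod_cast hM
    have h1 : (1:ℝ)/((M:ℝ)+1)^2 ≤ 1/((M:ℝ)*((M:ℝ)+1)) := by
      apply one_div_le_one_div_of_le (by nlinarith) (by nlinarith)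
    have h2 : (1:ℝ)/((M:ℝ)*((M:ℝ)+1)) = 1/(M:ℝ) - 1/((M:ℝ)+1) := by
      field_simp
      ring
    push_cast
    push_cast at ih
    linarith

private lemma sum_primesq_le (M : ℕ) (S : Finset ℕ) (hP : ∀ p ∈ S, p.Prime)
    (hS : ∀ p ∈ S, p ≤ M) : ∑ p ∈ S, (1:ℝ)/(p:ℝ)^2 ≤ 25/36 := by
  classical
  rw [← Finset.sum_filter_add_sum_filter_not S (fun p => p ≤ 3)]
  have h1 : ∑ p ∈ S.filter (fun p => p ≤ 3), (1:ℝ)/(p:ℝ)^2 ≤ 1/4 + 1/9 := by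
    have hsub : S.filter (fun p => p ≤ 3) ⊆ ({2, 3} : Finset ℕ) := by
      intro p hp
      simp only [Finset.mem_filter] at hp
      have := (hP p hp.1).two_le
      simp only [Finset.mem_insert, Finset.mem_singleton]
      omega
    calc ∑ p ∈ S.filter (fun p => p ≤ 3), (1:ℝ)/(p:ℝ)^2
        ≤ ∑ p ∈ ({2,3} : Finset ℕ), (1:ℝ)/(p:ℝ)^2 :=
          Finset.sum_le_sum_of_subset_of_nonneg hsub (by intros; positivity)
      _ = 1/4 + 1/9 := by norm_num
  have h2 : ∑ p ∈ S.filter (fun p => ¬ p ≤ 3), (1:ℝ)/(p:ℝ)^2 ≤ 1/3 := by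
    have hsub : S.filter (fun p => ¬ p ≤ 3) ⊆ Finset.Icc 4 (max M 3) := by
      intro p hp
      simp only [Finset.mem_filter, not_le] at hp
      simp only [Finset.mem_Icc]
      exact ⟨hp.2, le_max_of_le_left (hS p hp.1)⟩
    calc ∑ p ∈ S.filter (fun p => ¬ p ≤ 3), (1:ℝ)/(p:ℝ)^2
        ≤ ∑ k ∈ Finset.Icc 4 (max M 3), (1:ℝ)/(k:ℝ)^2 :=
          Finset.sum_le_sum_of_subset_of_nonneg hsub (by intros; positivity)
      _ ≤ 1/3 - 1/((max M 3 : ℕ):ℝ) := telescope_aux _ (le_max_right _ _)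
      _ ≤ 1/3 := by
          have : (0:ℝ) ≤ 1/((max M 3 : ℕ):ℝ) := by positivity
          linarith
  linarith


private lemma count_AP_upper (x m : ℕ) (P : ℕ → Prop) [DecidablePred P]
    (hP : ∀ a b : ℕ, P a → P b → a % m = b % m) :
    ((Finset.Icc 1 x).filter P).card ≤ x / m + 1 := by
  classical
  have h : ((Finset.Icc 1 x).filter P).card ≤ (Finset.range (x / m + 1)).card := by
    apply Finset.card_le_card_of_injOn (fun n => n / m)
    · intro n hn
      simp only [Finset.mem_coe, Finset.mem_filter, Finset.mem_Icc] at hn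
      simp only [Finset.mem_coe, Finset.mem_range]
      have := Nat.div_le_div_right (c := m) hn.1.2
      omega
    · intro a ha b hb hab
      simp only [Finset.coe_filter, Set.mem_setOf_eq, Finset.mem_Icc] at ha hb
      simp only at hab
      have h1 := Nat.div_add_mod a m
      have h2 := Nat.div_add_mod b m
      have h3 := hP a b ha.2 hb.2
      rw [← hab, ← h3] at h2
      omega
  simpa using h

private lemma count_AP_lower (x m : ℕ) (hm : 2 ≤ m) :
    x / m ≤ ((Finset.Icc 1 x).filter (fun n => n % m = 1)).card := by
  classical
  have h : (Finset.range (x / m)).card ≤ ((Finset.Icc 1 x).filter (fun n => n % m = 1)).card := by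
    apply Finset.card_le_card_of_injOn (fun k => k * m + 1)
    · intro k hk
      simp only [Finset.mem_coe, Finset.mem_range] at hk
      have hk1 : k + 1 ≤ x / m := hk
      have : (k + 1) * m ≤ x := (Nat.le_div_iff_mul_le (by omega)).mp hk1
      simp only [Finset.mem_coe, Finset.mem_filter, Finset.mem_Icc]
      refine ⟨⟨by omega, by nlinarith⟩, ?_⟩
      show (k * m + 1) % m = 1
      rw [Nat.mul_comm k m, Nat.mul_add_mod, Nat.mod_eq_of_lt hm]
    · intro a _ b _ hab
      simp only at hab
      have : a * m = b * m := by omega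
      exact Nat.eq_of_mul_eq_mul_right (by omega) this
  simpa using h

private lemma lam_ne_zero_aux (lam : ℕ → ℝ) (h1 : lam 1 = 1)
    (hmul : ∀ m n : ℕ, Nat.Coprime m n → lam (m * n) = lam m * lam n) :
    ∀ n : ℕ, 0 < n → Squarefree n → (∀ p : ℕ, p.Prime → p ∣ n → lam p ≠ 0) → lam n ≠ 0 := by
  intro n
  induction n using Nat.strong_induction_on with
  | _ n ih =>
    intro hn hsf hp
    by_cases hone : n = 1
    · rw [hone, h1]; norm_num
    · set p := n.minFac with hpdef
      have hprime : p.Prime := Nat.minFac_prime hone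
      have hdvd : p ∣ n := Nat.minFac_dvd n
      have hco : Nat.Coprime p (n / p) := by
        rw [Nat.Prime.coprime_iff_not_dvd hprime]
        intro hcon
        have hsq : p * p ∣ n := by
          have := mul_dvd_mul_left p hcon
          rwa [Nat.mul_div_cancel' hdvd] at this
        exact (Nat.squarefree_iff_prime_squarefree.mp hsf p hprime) hsq
      have heq : n = p * (n / p) := (Nat.mul_div_cancel' hdvd).symm
      rw [heq, hmul _ _ hco]
      have hlt : n / p < n := Nat.div_lt_self hn hprime.one_lt
      have hpos : 0 < n / p := Nat.div_pos (Nat.le_of_dvd hn hdvd) hprime.pos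
      exact mul_ne_zero (hp p hprime hdvd)
        (ih _ hlt hpos (hsf.squarefree_of_dvd (Nat.div_dvd_of_dvd hdvd))
          (fun r hr hrd => hp r hr (hrd.trans (Nat.div_dvd_of_dvd hdvd))))

private lemma tail_small (lam : ℕ → ℝ) (C : ℝ) (hC : 0 < C)
    (hS : ∀ x : ℕ, 2 ≤ x → (((Finset.Icc 1 x).filter (fun p => p.Prime ∧ lam p = 0)).card : ℝ)
        ≤ C * (x : ℝ) / (Real.log x) ^ ((1 : ℝ) + 1/4)) :
    ∃ J : ℕ, 1 ≤ J ∧ ∀ x : ℕ,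
      ∑ p ∈ (Finset.Icc 1 x).filter (fun p => p.Prime ∧ lam p = 0 ∧ 2 ^ J < p),
        (1:ℝ)/(p:ℝ) ≤ 1/8 := by
  classical
  have hlog2 : (0:ℝ) < Real.log 2 := Real.log_pos (by norm_num)
  set c2 : ℝ := (Real.log 2) ^ ((5:ℝ)/4) with hc2def
  have hc2 : 0 < c2 := Real.rpow_pos_of_pos hlog2 _
  set K : ℝ := 4 * C / c2 with hKdef
  have hK : 0 < K := by positivity
  set g : ℕ → ℝ := fun j => K * (1 / (j:ℝ) ^ ((5:ℝ)/4)) with hgdef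
  have hg_sum : Summable g :=
    (Real.summable_one_div_nat_rpow.mpr (by norm_num)).mul_left K
  have hg_nonneg : ∀ j, 0 ≤ g j := by
    intro j
    have : (0:ℝ) ≤ (j:ℝ) ^ ((5:ℝ)/4) := Real.rpow_nonneg (Nat.cast_nonneg j) _
    positivity
  have h_tend := tendsto_sum_nat_add g
  have hev : ∀ᶠ i in Filter.atTop, ∑' k, g (k + i) < 1/8 :=
    h_tend.eventually (gt_mem_nhds (by norm_num))
  obtain ⟨J, hJtail, hJ1⟩ := (hev.and (Filter.eventually_ge_atTop 1)).exists
  refine ⟨J, hJ1, fun x => ?_⟩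
  set T := (Finset.Icc 1 x).filter (fun p => p.Prime ∧ lam p = 0 ∧ 2 ^ J < p) with hTdef
  have hfib : ∀ p ∈ T, Nat.log 2 p ∈ Finset.Icc J x := by
    intro p hp
    simp only [hTdef, Finset.mem_filter, Finset.mem_Icc] at hp
    obtain ⟨⟨hp1, hpx⟩, hprime, hlam, hJp⟩ := hp
    have hpne : p ≠ 0 := by omega
    refine Finset.mem_Icc.mpr ⟨?_, (Nat.log_le_self 2 p).trans hpx⟩
    exact (Nat.le_log_iff_pow_le one_lt_two hpne).mpr (le_of_lt hJp)
  rw [← Finset.sum_fiberwise_of_maps_to hfib (fun p => (1:ℝ)/(p:ℝ))]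
  have fiber_bound : ∀ j ∈ Finset.Icc J x,
      ∑ p ∈ T.filter (fun p => Nat.log 2 p = j), (1:ℝ)/(p:ℝ) ≤ g j := by
    intro j hj
    have hjJ : J ≤ j := (Finset.mem_Icc.mp hj).1
    have hj1 : 1 ≤ j := le_trans hJ1 hjJ
    have hjR : (1:ℝ) ≤ (j:ℝ) := by exact_mod_cast hj1
    -- each element p of the fiber satisfies 2^j ≤ p ≤ 2^(j+1)
    have hmem : ∀ p ∈ T.filter (fun p => Nat.log 2 p = j),
        2^j ≤ p ∧ p ≤ 2^(j+1) ∧ p.Prime ∧ lam p = 0 := by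
      intro p hp
      simp only [Finset.mem_filter, hTdef, Finset.mem_Icc] at hp
      obtain ⟨⟨⟨hp1, hpx⟩, hprime, hlam, hJp⟩, hlog⟩ := hp
      have hpne : p ≠ 0 := by omega
      constructor
      · rw [← hlog]; exact Nat.pow_log_le_self 2 hpne
      · refine ⟨?_, hprime, hlam⟩
        have := Nat.lt_pow_succ_log_self (b := 2) one_lt_two p
        rw [hlog] at this
        omega
    have hsub : T.filter (fun p => Nat.log 2 p = j) ⊆
        (Finset.Icc 1 (2^(j+1))).filter (fun p => p.Prime ∧ lam p = 0) := by
      intro p hp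
      obtain ⟨h1, h2, h3, h4⟩ := hmem p hp
      have : 1 ≤ p := le_trans (Nat.one_le_two_pow) h1
      exact Finset.mem_filter.mpr ⟨Finset.mem_Icc.mpr ⟨this, h2⟩, h3, h4⟩
    have hcard : ((T.filter (fun p => Nat.log 2 p = j)).card : ℝ)
        ≤ C * ((2:ℝ)^(j+1)) / (Real.log ((2:ℝ)^(j+1))) ^ ((1:ℝ) + 1/4) := by
      have h1 : ((T.filter (fun p => Nat.log 2 p = j)).card : ℝ)
          ≤ (((Finset.Icc 1 (2^(j+1))).filter (fun p => p.Prime ∧ lam p = 0)).card : ℝ) := by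
        exact_mod_cast Finset.card_le_card hsub
      have h2 := hS (2^(j+1)) (by
        have : 2^1 ≤ 2^(j+1) := Nat.pow_le_pow_right (by norm_num) (by omega)
        omega)
      push_cast at h2
      exact h1.trans h2
    have hsum1 : ∑ p ∈ T.filter (fun p => Nat.log 2 p = j), (1:ℝ)/(p:ℝ)
        ≤ ((T.filter (fun p => Nat.log 2 p = j)).card : ℝ) * (1 / (2:ℝ)^j) := by
      rw [← nsmul_eq_mul]
      apply Finset.sum_le_card_nsmul
      intro p hp
      obtain ⟨h1, _, _, _⟩ := hmem p hp
      have hp0 : (0:ℝ) < (2:ℝ)^j := by positivity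
      apply div_le_div_of_nonneg_left (by norm_num) hp0
      exact_mod_cast h1
    -- estimate the log power
    have hlogpow : ((j:ℝ)) ^ ((5:ℝ)/4) * c2 ≤ (Real.log ((2:ℝ)^(j+1))) ^ ((1:ℝ) + 1/4) := by
      rw [Real.log_pow]
      have hj1' : (j:ℝ) ≤ ((j:ℕ):ℝ) + 1 := by linarith
      have e1 : ((1:ℝ) + 1/4) = (5:ℝ)/4 := by norm_num
      rw [e1]
      have hmul : ((j:ℝ) * Real.log 2) ^ ((5:ℝ)/4)
          = (j:ℝ) ^ ((5:ℝ)/4) * c2 := by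
        rw [Real.mul_rpow (by positivity) (le_of_lt hlog2)]
      rw [← hmul]
      apply Real.rpow_le_rpow (by positivity) ?_ (by norm_num)
      have : (0:ℝ) ≤ Real.log 2 := le_of_lt hlog2
      push_cast
      nlinarith
    have hLpos : (0:ℝ) < (Real.log ((2:ℝ)^(j+1))) ^ ((1:ℝ) + 1/4) := by
      have : (0:ℝ) < Real.log ((2:ℝ)^(j+1)) := by
        rw [Real.log_pow]
        positivity
      exact Real.rpow_pos_of_pos this _
    have hjpow : (0:ℝ) < (j:ℝ) ^ ((5:ℝ)/4) := Real.rpow_pos_of_pos (by linarith) _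
    calc ∑ p ∈ T.filter (fun p => Nat.log 2 p = j), (1:ℝ)/(p:ℝ)
        ≤ ((T.filter (fun p => Nat.log 2 p = j)).card : ℝ) * (1 / (2:ℝ)^j) := hsum1
      _ ≤ (C * ((2:ℝ)^(j+1)) / (Real.log ((2:ℝ)^(j+1))) ^ ((1:ℝ) + 1/4)) * (1 / (2:ℝ)^j) := by
          apply mul_le_mul_of_nonneg_right hcard (by positivity)
      _ = 2 * C / (Real.log ((2:ℝ)^(j+1))) ^ ((1:ℝ) + 1/4) := by
          have h2j : ((2:ℝ)^j) ≠ 0 := by positivity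
          have hkey : C * (2:ℝ)^(j+1) * (1/(2:ℝ)^j) = 2*C := by
            rw [pow_succ]; field_simp
          calc C * ((2:ℝ)^(j+1)) / (Real.log ((2:ℝ)^(j+1))) ^ ((1:ℝ) + 1/4) * (1 / (2:ℝ)^j)
              = C * (2:ℝ)^(j+1) * (1/(2:ℝ)^j) / (Real.log ((2:ℝ)^(j+1))) ^ ((1:ℝ) + 1/4) := by
                ring
            _ = 2 * C / (Real.log ((2:ℝ)^(j+1))) ^ ((1:ℝ) + 1/4) := by rw [hkey]
      _ ≤ 2 * C / ((j:ℝ) ^ ((5:ℝ)/4) * c2) := by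
          apply div_le_div_of_nonneg_left (by positivity) (by positivity) hlogpow
      _ ≤ g j := by
          have hne1 : ((j:ℝ) ^ ((5:ℝ)/4)) ≠ 0 := ne_of_gt hjpow
          have hne2 : c2 ≠ 0 := ne_of_gt hc2
          have hfrac : 2 * C / ((j:ℝ)^((5:ℝ)/4) * c2)
              = (2*C/c2) * (1/(j:ℝ)^((5:ℝ)/4)) := by
            field_simp
          rw [hfrac, hgdef]
          simp only
          rw [hKdef]
          apply mul_le_mul_of_nonneg_right ?_ (by positivity)
          gcongr
          linarith
  calc ∑ j ∈ Finset.Icc J x, ∑ p ∈ T.filter (fun p => Nat.log 2 p = j), (1:ℝ)/(p:ℝ)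
      ≤ ∑ j ∈ Finset.Icc J x, g j := Finset.sum_le_sum fiber_bound
    _ ≤ ∑' k, g (k + J) := by
        by_cases hJx : J ≤ x
        · have hIcc : Finset.Icc J x = Finset.Ico J (x+1) := by rw [Finset.Ico_add_one_right_eq_Icc]
          have hsplit := Finset.sum_Ico_consecutive g (Nat.zero_le J) (by omega : J ≤ x+1)
          have h2 := Summable.sum_add_tsum_nat_add (f := g) J hg_sum
          have h3 : ∑ i ∈ Finset.range (x+1), g i ≤ ∑' i, g i :=
            Summable.sum_le_tsum _ (fun i _ => hg_nonneg i) hg_sum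
          rw [Finset.range_eq_Ico] at h2 h3
          rw [hIcc]
          linarith
        · have : Finset.Icc J x = ∅ := Finset.Icc_eq_empty (by omega)
          rw [this, Finset.sum_empty]
          exact tsum_nonneg (fun k => hg_nonneg _)
    _ ≤ 1/8 := le_of_lt hJtail

set_option maxHeartbeats 1600000 in
theorem positive_proportion_of_each_sign (k N : ℕ) (hk : Even k) (hk2 : 2 ≤ k)
    (hN : Squarefree N) (f : PrimitiveForm k N) :
    ∃ c > (0 : ℝ), ∃ x₀ : ℕ, ∀ x : ℕ, x₀ ≤ x →
      c * (x : ℝ) ≤ (((Finset.Icc 1 x).filter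
          (fun n => Nat.Coprime n N ∧ 0 < f.lam n)).card : ℝ) ∧
      c * (x : ℝ) ≤ (((Finset.Icc 1 x).filter
          (fun n => Nat.Coprime n N ∧ f.lam n < 0)).card : ℝ) := by
  classical
  obtain ⟨q, hq_prime, hqN, hq_neg⟩ := f.exists_neg
  have hq2 : 2 ≤ q := hq_prime.two_le
  have hN1 : 1 ≤ N := Nat.pos_of_ne_zero hN.ne_zero
  obtain ⟨C, hC, hSerre⟩ := f.serre (1/4) (by norm_num)
  obtain ⟨J, hJ1, hTail⟩ := tail_small f.lam C hC hSerre
  set Zsmall := (Finset.Icc 1 (2^J)).filter (fun p => p.Prime ∧ f.lam p = 0) with hZsmalldef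
  set W := q * N * ∏ p ∈ Zsmall, p with hWdef
  have hprod1 : 1 ≤ ∏ p ∈ Zsmall, p :=
    Finset.one_le_prod' (fun p hp => (Finset.mem_filter.mp hp).2.1.pos)
  have hW2 : 2 ≤ W := by
    calc 2 ≤ q := hq2
    _ = q * 1 * 1 := by ring
    _ ≤ q * N * ∏ p ∈ Zsmall, p := Nat.mul_le_mul (Nat.mul_le_mul le_rfl hN1) hprod1
  have hWpos : (0:ℝ) < (W:ℝ) := by exact_mod_cast (by omega : 0 < W)
  have hqW : q ∣ W := dvd_mul_of_dvd_left (dvd_mul_right q N) _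
  have hNW : N ∣ W := dvd_mul_of_dvd_left (dvd_mul_left N q) _
  have hZW : ∀ p ∈ Zsmall, p ∣ W := fun p hp =>
    dvd_mul_of_dvd_right (Finset.dvd_prod_of_mem _ hp) _
  have hmod : ∀ n d : ℕ, n % W = 1 → d ∣ W → 2 ≤ d → ¬ d ∣ n := by
    intro n d h hdW hd2 hdn
    have h1W : 1 % W = 1 := Nat.mod_eq_of_lt (by omega)
    have hMod : n ≡ 1 [MOD d] :=
      Nat.ModEq.of_dvd hdW (show n ≡ 1 [MOD W] by unfold Nat.ModEq; rw [h, h1W])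
    have h1 : n % d = 1 % d := hMod
    rw [Nat.mod_eq_of_lt (by omega : 1 < d)] at h1
    obtain ⟨c, rfl⟩ := hdn
    rw [Nat.mul_mod_right] at h1
    exact absurd h1 (by omega)
  set GoodP : ℕ → Prop :=
    fun n => n % W = 1 ∧ Squarefree n ∧ ∀ p : ℕ, p.Prime → p ∣ n → f.lam p ≠ 0 with hGoodPdef
  -- properties of good numbers
  have hGoodprop : ∀ x' : ℕ, ∀ n ∈ (Finset.Icc 1 x').filter GoodP,
      1 ≤ n ∧ n ≤ x' ∧ Nat.Coprime n N ∧ ¬ q ∣ n ∧ f.lam n ≠ 0 := by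
    intro x' n hn
    rw [Finset.mem_filter, Finset.mem_Icc] at hn
    obtain ⟨⟨hn1, hnx⟩, hmodW, hsf, hpz⟩ := hn
    have hcop : Nat.Coprime n N := by
      by_contra hco
      have hg2 : 2 ≤ Nat.gcd n N := by
        have h0 : Nat.gcd n N ≠ 0 := fun h => by
          have := Nat.eq_zero_of_gcd_eq_zero_right h; omega
        have h1 : Nat.gcd n N ≠ 1 := hco
        omega
      set p := (Nat.gcd n N).minFac with hpdef
      have hp : p.Prime := Nat.minFac_prime (by omega)
      have hpn : p ∣ n := (Nat.minFac_dvd _).trans (Nat.gcd_dvd_left _ _)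
      have hpN : p ∣ N := (Nat.minFac_dvd _).trans (Nat.gcd_dvd_right _ _)
      exact hmod n p hmodW (hpN.trans hNW) hp.two_le hpn
    have hqn : ¬ q ∣ n := hmod n q hmodW hqW hq2
    exact ⟨hn1, hnx, hcop, hqn, lam_ne_zero_aux f.lam f.lam_one f.mult n (by omega) hsf hpz⟩
  -- main counting estimate
  have hGoodCount : ∃ x₁ : ℕ, 1 ≤ x₁ ∧ ∀ x : ℕ, x₁ ≤ x →
      (x:ℝ)/(8*W) ≤ (((Finset.Icc 1 x).filter GoodP).card : ℝ) := by
    have htend : Filter.Tendsto (fun y : ℝ => C / (Real.log y) ^ ((1:ℝ)+1/4))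
        Filter.atTop (nhds 0) :=
      Filter.Tendsto.div_atTop tendsto_const_nhds
        ((tendsto_rpow_atTop (by norm_num)).comp Real.tendsto_log_atTop)
    have hev : ∀ᶠ y in Filter.atTop, C / (Real.log y) ^ ((1:ℝ)+1/4) < 1/(100*W) :=
      htend.eventually (gt_mem_nhds (by positivity))
    obtain ⟨R, hR⟩ := Filter.eventually_atTop.mp hev
    refine ⟨max (max 2 (Nat.ceil R)) (max ((100*W)^2) (300*W)), le_trans (by norm_num) (le_max_of_le_left (le_max_left _ _)), ?_⟩
    intro x hx
    have hx2 : 2 ≤ x := le_trans (le_max_of_le_left (le_max_left _ _)) hx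
    have hxR : R ≤ (x:ℝ) := by
      have h1 : Nat.ceil R ≤ x := le_trans (le_max_of_le_left (le_max_right _ _)) hx
      calc R ≤ (Nat.ceil R : ℝ) := Nat.le_ceil R
      _ ≤ (x:ℝ) := by exact_mod_cast h1
    have hxsq : (100*W)^2 ≤ x := le_trans (le_max_of_le_right (le_max_left _ _)) hx
    have hx300 : 300*W ≤ x := le_trans (le_max_of_le_right (le_max_right _ _)) hx
    have hxpos : (0:ℝ) < (x:ℝ) := by
      have : 0 < x := by omega
      exact_mod_cast this
    -- the zero-prime count is small
    have hZc : ((((Finset.Icc 1 x).filter (fun p => p.Prime ∧ f.lam p = 0)).card : ℝ))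
        ≤ (x:ℝ)/W/100 := by
      calc ((((Finset.Icc 1 x).filter (fun p => p.Prime ∧ f.lam p = 0)).card : ℝ))
          ≤ C * (x:ℝ) / (Real.log x) ^ ((1:ℝ)+1/4) := hSerre x hx2
        _ = (C / (Real.log x) ^ ((1:ℝ)+1/4)) * (x:ℝ) := by ring
        _ ≤ (1/(100*W)) * (x:ℝ) := by
            apply mul_le_mul_of_nonneg_right (le_of_lt (hR x hxR)) (le_of_lt hxpos)
        _ = (x:ℝ)/W/100 := by ring
    -- the sqrt bound
    have hsqrt : ((Nat.sqrt x : ℕ) : ℝ) ≤ (x:ℝ)/W/100 := by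
      have h1 : 100*W ≤ Nat.sqrt x := Nat.le_sqrt.mpr (by rw [← pow_two]; exact hxsq)
      have h2 : Nat.sqrt x * (100*W) ≤ x :=
        le_trans (Nat.mul_le_mul_left _ h1) (Nat.sqrt_le x)
      have h2' : ((Nat.sqrt x : ℕ):ℝ) * (100*W) ≤ (x:ℝ) := by exact_mod_cast h2
      rw [div_div, le_div_iff₀ (by positivity)]
      calc ((Nat.sqrt x : ℕ):ℝ) * ((W:ℝ)*100) = ((Nat.sqrt x : ℕ):ℝ) * (100*(W:ℝ)) := by ring
        _ ≤ (x:ℝ) := by exact_mod_cast h2'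
    -- sets
    set A := (Finset.Icc 1 x).filter (fun n => n % W = 1) with hAdef
    set Esq := (Finset.Icc 1 x).filter (fun n => n % W = 1 ∧ ¬ Squarefree n) with hEsqdef
    set Ebad := (Finset.Icc 1 x).filter
      (fun n => n % W = 1 ∧ ∃ p : ℕ, p.Prime ∧ p ∣ n ∧ f.lam p = 0) with hEbaddef
    have hcover : A ⊆ (((Finset.Icc 1 x).filter GoodP) ∪ Esq) ∪ Ebad := by
      intro n hn
      rw [hAdef, Finset.mem_filter] at hn
      rw [Finset.mem_union, Finset.mem_union]
      by_cases h1 : Squarefree n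
      · by_cases h2 : ∃ p : ℕ, p.Prime ∧ p ∣ n ∧ f.lam p = 0
        · exact Or.inr (by rw [hEbaddef, Finset.mem_filter]; exact ⟨hn.1, hn.2, h2⟩)
        · refine Or.inl (Or.inl ?_)
          rw [Finset.mem_filter]
          exact ⟨hn.1, hn.2, h1, fun p hp hpn h0 => h2 ⟨p, hp, hpn, h0⟩⟩
      · exact Or.inl (Or.inr (by rw [hEsqdef, Finset.mem_filter]; exact ⟨hn.1, hn.2, h1⟩))
    have hcardcover : (A.card : ℝ) ≤ (((Finset.Icc 1 x).filter GoodP).card : ℝ)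
        + (Esq.card : ℝ) + (Ebad.card : ℝ) := by
      have h1 : A.card ≤ ((Finset.Icc 1 x).filter GoodP).card + Esq.card + Ebad.card :=
        (Finset.card_le_card hcover).trans
          (le_trans (Finset.card_union_le _ _)
            (Nat.add_le_add_right (Finset.card_union_le _ _) _))
      exact_mod_cast h1
    -- lower bound for A
    have hAlow : (x:ℝ)/W - 1 ≤ (A.card : ℝ) := by
      have h1 : x / W ≤ A.card := count_AP_lower x W hW2
      have h2 : ((x / W : ℕ) : ℝ) ≤ (A.card : ℝ) := by exact_mod_cast h1
      have h3 : x < W * (x / W) + W := by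
        have := Nat.div_add_mod x W
        have := Nat.mod_lt x (show 0 < W by omega)
        omega
      have h4 : (x:ℝ) < (W:ℝ) * ((x / W : ℕ):ℝ) + W := by exact_mod_cast h3
      have h5 : (x:ℝ)/W - 1 ≤ ((x / W : ℕ):ℝ) := by
        rw [sub_le_iff_le_add, div_le_iff₀ hWpos]
        nlinarith
      linarith
    -- bound for Esq
    set Psq := (Finset.Icc 2 (Nat.sqrt x)).filter (fun p => p.Prime ∧ ¬ p ∣ W) with hPsqdef
    have hEsqsub : Esq ⊆ Psq.biUnion
        (fun p => (Finset.Icc 1 x).filter (fun n => n % W = 1 ∧ p*p ∣ n)) := by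
      intro n hn
      rw [hEsqdef, Finset.mem_filter, Finset.mem_Icc] at hn
      obtain ⟨⟨hn1, hnx⟩, hmodW, hnsf⟩ := hn
      rw [Nat.squarefree_iff_prime_squarefree] at hnsf
      push_neg at hnsf
      obtain ⟨p, hp, hpn⟩ := hnsf
      have hpn' : p ∣ n := (Dvd.intro p rfl).trans hpn
      have hple : p * p ≤ n := Nat.le_of_dvd (by omega) hpn
      rw [Finset.mem_biUnion]
      refine ⟨p, ?_, ?_⟩
      · rw [hPsqdef, Finset.mem_filter, Finset.mem_Icc]
        exact ⟨⟨hp.two_le, Nat.le_sqrt.mpr (by omega)⟩, hp,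
          fun hpW => hmod n p hmodW hpW hp.two_le hpn'⟩
      · rw [Finset.mem_filter, Finset.mem_Icc]
        exact ⟨⟨hn1, hnx⟩, hmodW, hpn⟩
    have hMp : ∀ p ∈ Psq, (((Finset.Icc 1 x).filter (fun n => n % W = 1 ∧ p*p ∣ n)).card : ℝ)
        ≤ (x:ℝ)/W * (1/(p:ℝ)^2) + 1 := by
      intro p hp
      rw [hPsqdef, Finset.mem_filter, Finset.mem_Icc] at hp
      obtain ⟨⟨hp2, hps⟩, hprime, hpW⟩ := hp
      have hcop : Nat.Coprime W (p*p) :=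
        Nat.Coprime.mul_right ((hprime.coprime_iff_not_dvd.mpr hpW).symm)
          ((hprime.coprime_iff_not_dvd.mpr hpW).symm)
      have hcount : ((Finset.Icc 1 x).filter (fun n => n % W = 1 ∧ p*p ∣ n)).card
          ≤ x / (W*(p*p)) + 1 := by
        apply count_AP_upper
        intro a b ha hb
        have hm1 : a ≡ b [MOD W] := by unfold Nat.ModEq; rw [ha.1, hb.1]
        have hm2 : a ≡ b [MOD p*p] := by
          obtain ⟨c, hc⟩ := ha.2
          obtain ⟨d, hd⟩ := hb.2
          unfold Nat.ModEq
          rw [hc, hd, Nat.mul_mod_right, Nat.mul_mod_right]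
        exact (Nat.modEq_and_modEq_iff_modEq_mul hcop).mp ⟨hm1, hm2⟩
      have h2 : (((Finset.Icc 1 x).filter (fun n => n % W = 1 ∧ p*p ∣ n)).card : ℝ)
          ≤ ((x / (W*(p*p)) : ℕ) : ℝ) + 1 := by exact_mod_cast hcount
      refine h2.trans ?_
      have h3 : ((x / (W*(p*p)) : ℕ) : ℝ) ≤ (x:ℝ) / ((W:ℝ)*((p:ℝ)*(p:ℝ))) := by
        have := Nat.cast_div_le (α := ℝ) (m := x) (n := W*(p*p))
        push_cast at this
        exact this
      have h4 : (x:ℝ)/W * (1/(p:ℝ)^2) = (x:ℝ) / ((W:ℝ)*((p:ℝ)*(p:ℝ))) := by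
        rw [div_mul_div_comm, mul_one, pow_two]
      rw [h4]
      linarith
    have hEsqR : (Esq.card : ℝ) ≤ (x:ℝ)/W * (25/36) + (x:ℝ)/W/100 := by
      have h1 : Esq.card ≤ ∑ p ∈ Psq,
          ((Finset.Icc 1 x).filter (fun n => n % W = 1 ∧ p*p ∣ n)).card :=
        (Finset.card_le_card hEsqsub).trans (Finset.card_biUnion_le)
      have h2 : (Esq.card : ℝ) ≤ ∑ p ∈ Psq, ((x:ℝ)/W * (1/(p:ℝ)^2) + 1) := by
        calc (Esq.card : ℝ) ≤ ∑ p ∈ Psq,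
            ((((Finset.Icc 1 x).filter (fun n => n % W = 1 ∧ p*p ∣ n)).card : ℕ) : ℝ) := by
              exact_mod_cast h1
        _ ≤ ∑ p ∈ Psq, ((x:ℝ)/W * (1/(p:ℝ)^2) + 1) := Finset.sum_le_sum hMp
      rw [Finset.sum_add_distrib, Finset.sum_const, nsmul_eq_mul, mul_one, ← Finset.mul_sum] at h2
      have h3 : ∑ p ∈ Psq, (1/(p:ℝ)^2) ≤ 25/36 := by
        apply sum_primesq_le (Nat.sqrt x)
        · intro p hp
          rw [hPsqdef, Finset.mem_filter] at hp
          exact hp.2.1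
        · intro p hp
          rw [hPsqdef, Finset.mem_filter, Finset.mem_Icc] at hp
          exact hp.1.2
      have h4 : (Psq.card : ℝ) ≤ ((Nat.sqrt x : ℕ) : ℝ) := by
        have h5 : Psq.card ≤ (Finset.Icc 2 (Nat.sqrt x)).card :=
          Finset.card_le_card (Finset.filter_subset _ _)
        rw [Nat.card_Icc] at h5
        have h6 : Psq.card ≤ Nat.sqrt x := by omega
        exact_mod_cast h6
      have h7 : (x:ℝ)/W * ∑ p ∈ Psq, (1/(p:ℝ)^2) ≤ (x:ℝ)/W * (25/36) :=
        mul_le_mul_of_nonneg_left h3 (by positivity)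
      linarith
    -- bound for Ebad
    set Pbad := (Finset.Icc 1 x).filter
      (fun p => p.Prime ∧ f.lam p = 0 ∧ 2^J < p ∧ ¬ p ∣ W) with hPbaddef
    have hEbadsub : Ebad ⊆ Pbad.biUnion
        (fun p => (Finset.Icc 1 x).filter (fun n => n % W = 1 ∧ p ∣ n)) := by
      intro n hn
      rw [hEbaddef, Finset.mem_filter, Finset.mem_Icc] at hn
      obtain ⟨⟨hn1, hnx⟩, hmodW, p, hp, hpn, hlam⟩ := hn
      have hpx : p ≤ x := le_trans (Nat.le_of_dvd (by omega) hpn) hnx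
      have hpW : ¬ p ∣ W := fun hpW => hmod n p hmodW hpW hp.two_le hpn
      have hpz : 2^J < p := by
        by_contra hle
        push_neg at hle
        have hpZ : p ∈ Zsmall := by
          rw [hZsmalldef, Finset.mem_filter, Finset.mem_Icc]
          exact ⟨⟨hp.one_lt.le, hle⟩, hp, hlam⟩
        exact hpW (hZW p hpZ)
      rw [Finset.mem_biUnion]
      refine ⟨p, ?_, ?_⟩
      · rw [hPbaddef, Finset.mem_filter, Finset.mem_Icc]
        exact ⟨⟨hp.one_lt.le, hpx⟩, hp, hlam, hpz, hpW⟩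
      · rw [Finset.mem_filter, Finset.mem_Icc]
        exact ⟨⟨hn1, hnx⟩, hmodW, hpn⟩
    have hNp : ∀ p ∈ Pbad, (((Finset.Icc 1 x).filter (fun n => n % W = 1 ∧ p ∣ n)).card : ℝ)
        ≤ (x:ℝ)/W * (1/(p:ℝ)) + 1 := by
      intro p hp
      rw [hPbaddef, Finset.mem_filter, Finset.mem_Icc] at hp
      obtain ⟨⟨hp1, hpx⟩, hprime, hlam, hpz, hpW⟩ := hp
      have hcop : Nat.Coprime W p := (hprime.coprime_iff_not_dvd.mpr hpW).symm
      have hcount : ((Finset.Icc 1 x).filter (fun n => n % W = 1 ∧ p ∣ n)).card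
          ≤ x / (W*p) + 1 := by
        apply count_AP_upper
        intro a b ha hb
        have hm1 : a ≡ b [MOD W] := by unfold Nat.ModEq; rw [ha.1, hb.1]
        have hm2 : a ≡ b [MOD p] := by
          obtain ⟨c, hc⟩ := ha.2
          obtain ⟨d, hd⟩ := hb.2
          unfold Nat.ModEq
          rw [hc, hd, Nat.mul_mod_right, Nat.mul_mod_right]
        exact (Nat.modEq_and_modEq_iff_modEq_mul hcop).mp ⟨hm1, hm2⟩
      have h2 : (((Finset.Icc 1 x).filter (fun n => n % W = 1 ∧ p ∣ n)).card : ℝ)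
          ≤ ((x / (W*p) : ℕ) : ℝ) + 1 := by exact_mod_cast hcount
      refine h2.trans ?_
      have h3 : ((x / (W*p) : ℕ) : ℝ) ≤ (x:ℝ) / ((W:ℝ)*(p:ℝ)) := by
        have := Nat.cast_div_le (α := ℝ) (m := x) (n := W*p)
        push_cast at this
        exact this
      have h4 : (x:ℝ)/W * (1/(p:ℝ)) = (x:ℝ) / ((W:ℝ)*(p:ℝ)) := by
        rw [div_mul_div_comm, mul_one]
      rw [h4]
      linarith
    have hEbadR : (Ebad.card : ℝ) ≤ (x:ℝ)/W * (1/8) + (x:ℝ)/W/100 := by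
      have h1 : Ebad.card ≤ ∑ p ∈ Pbad,
          ((Finset.Icc 1 x).filter (fun n => n % W = 1 ∧ p ∣ n)).card :=
        (Finset.card_le_card hEbadsub).trans (Finset.card_biUnion_le)
      have h2 : (Ebad.card : ℝ) ≤ ∑ p ∈ Pbad, ((x:ℝ)/W * (1/(p:ℝ)) + 1) := by
        calc (Ebad.card : ℝ) ≤ ∑ p ∈ Pbad,
            ((((Finset.Icc 1 x).filter (fun n => n % W = 1 ∧ p ∣ n)).card : ℕ) : ℝ) := by
              exact_mod_cast h1
        _ ≤ ∑ p ∈ Pbad, ((x:ℝ)/W * (1/(p:ℝ)) + 1) := Finset.sum_le_sum hNp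
      rw [Finset.sum_add_distrib, Finset.sum_const, nsmul_eq_mul, mul_one, ← Finset.mul_sum] at h2
      have h3 : ∑ p ∈ Pbad, (1/(p:ℝ)) ≤ 1/8 := by
        refine le_trans (Finset.sum_le_sum_of_subset_of_nonneg ?_ ?_) (hTail x)
        · intro p hp
          rw [hPbaddef, Finset.mem_filter] at hp
          rw [Finset.mem_filter]
          exact ⟨hp.1, hp.2.1, hp.2.2.1, hp.2.2.2.1⟩
        · intro p _ _
          positivity
      have h4 : (Pbad.card : ℝ)
          ≤ ((((Finset.Icc 1 x).filter (fun p => p.Prime ∧ f.lam p = 0)).card : ℕ) : ℝ) := by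
        have h5 : Pbad ⊆ (Finset.Icc 1 x).filter (fun p => p.Prime ∧ f.lam p = 0) := by
          intro p hp
          rw [hPbaddef, Finset.mem_filter] at hp
          rw [Finset.mem_filter]
          exact ⟨hp.1, hp.2.1, hp.2.2.1⟩
        exact_mod_cast Finset.card_le_card h5
      have h7 : (x:ℝ)/W * ∑ p ∈ Pbad, (1/(p:ℝ)) ≤ (x:ℝ)/W * (1/8) :=
        mul_le_mul_of_nonneg_left h3 (by positivity)
      linarith
    -- assemble
    have hgoal : (x:ℝ)/(8*W) = ((x:ℝ)/W)/8 := by ring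
    rw [hgoal]
    have h1le : (1:ℝ) ≤ (x:ℝ)/W/100 := by
      rw [div_div, le_div_iff₀ (by positivity)]
      have : (300:ℝ)*W ≤ (x:ℝ) := by exact_mod_cast hx300
      nlinarith
    linarith
  -- sign change argument
  obtain ⟨x₁, hx₁1, hGC⟩ := hGoodCount
  have hqRpos : (0:ℝ) < (q:ℝ) := by exact_mod_cast (by omega : 0 < q)
  refine ⟨1/(16*(q:ℝ)*(W:ℝ)), by positivity, q*(x₁+2), fun x hx => ?_⟩
  set y := x / q with hydef
  have hy1 : x₁ ≤ y := by
    rw [hydef, Nat.le_div_iff_mul_le (by omega : 0 < q)]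
    nlinarith
  have hcount := hGC y hy1
  have hyq : q * y ≤ x := by
    rw [hydef]
    exact le_trans (le_of_eq (Nat.mul_comm q (x/q))) (Nat.div_mul_le_self x q)
  have hyR : (x:ℝ)/(2*(q:ℝ)) ≤ (y:ℝ) := by
    have h3 : x < q * y + q := by
      rw [hydef]
      have := Nat.div_add_mod x q
      have := Nat.mod_lt x (show 0 < q by omega)
      omega
    have h4 : (x:ℝ) < (q:ℝ) * (y:ℝ) + q := by exact_mod_cast h3
    have hx2q : (2*(q:ℝ)) ≤ (x:ℝ) := by
      have : 2*q ≤ x := by nlinarith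
      exact_mod_cast this
    rw [div_le_iff₀ (by positivity)]
    nlinarith
  have key : ∀ (s : Finset ℕ) (pred : ℕ → Prop) (hdp : DecidablePred pred),
      True := fun _ _ _ => trivial
  have hqn_cop : ∀ n, ¬ q ∣ n → Nat.Coprime q n := fun n h => hq_prime.coprime_iff_not_dvd.mpr h
  have hqN_cop : Nat.Coprime q N := hq_prime.coprime_iff_not_dvd.mpr hqN
  constructor
  · -- positive sign
    have hinj : ((Finset.Icc 1 y).filter GoodP).card ≤
        ((Finset.Icc 1 x).filter (fun n => Nat.Coprime n N ∧ 0 < f.lam n)).card := by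
      apply Finset.card_le_card_of_injOn (fun n => if 0 < f.lam n then n else q * n)
      · intro n hn
        obtain ⟨hn1, hny, hcop, hqn, hlam⟩ := hGoodprop y n hn
        rw [Finset.mem_coe, Finset.mem_filter, Finset.mem_Icc]
        beta_reduce
        by_cases hpos : 0 < f.lam n
        · rw [if_pos hpos]
          exact ⟨⟨hn1, hny.trans (Nat.div_le_self x q)⟩, hcop, hpos⟩
        · rw [if_neg hpos]
          have hneg : f.lam n < 0 := lt_of_le_of_ne (not_lt.mp hpos) hlam
          have hlamqn : f.lam (q*n) = f.lam q * f.lam n := f.mult q n (hqn_cop n hqn)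
          refine ⟨⟨by exact Nat.mul_pos (by omega) (by omega), ?_⟩, hqN_cop.mul hcop, ?_⟩
          · calc q*n ≤ q*y := Nat.mul_le_mul_left q hny
            _ ≤ x := hyq
          · rw [hlamqn]
            exact mul_pos_of_neg_of_neg hq_neg hneg
      · intro a ha b hb hab
        obtain ⟨ha1, hay, hacop, haq, halam⟩ := hGoodprop y a ha
        obtain ⟨hb1, hby, hbcop, hbq, hblam⟩ := hGoodprop y b hb
        simp only at hab
        by_cases hpa : 0 < f.lam a <;> by_cases hpb : 0 < f.lam b
        · rwa [if_pos hpa, if_pos hpb] at hab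
        · rw [if_pos hpa, if_neg hpb] at hab
          exact absurd ⟨b, hab⟩ haq
        · rw [if_neg hpa, if_pos hpb] at hab
          exact absurd ⟨a, hab.symm⟩ hbq
        · rw [if_neg hpa, if_neg hpb] at hab
          exact Nat.eq_of_mul_eq_mul_left (by omega) hab
    calc 1/(16*(q:ℝ)*(W:ℝ)) * (x:ℝ) = ((x:ℝ)/(2*(q:ℝ)))/(8*W) := by ring
      _ ≤ (y:ℝ)/(8*W) := by gcongr
      _ ≤ (((Finset.Icc 1 y).filter GoodP).card : ℝ) := hcount
      _ ≤ (((Finset.Icc 1 x).filter (fun n => Nat.Coprime n N ∧ 0 < f.lam n)).card : ℝ) := by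
          exact_mod_cast hinj
  · -- negative sign
    have hinj : ((Finset.Icc 1 y).filter GoodP).card ≤
        ((Finset.Icc 1 x).filter (fun n => Nat.Coprime n N ∧ f.lam n < 0)).card := by
      apply Finset.card_le_card_of_injOn (fun n => if f.lam n < 0 then n else q * n)
      · intro n hn
        obtain ⟨hn1, hny, hcop, hqn, hlam⟩ := hGoodprop y n hn
        rw [Finset.mem_coe, Finset.mem_filter, Finset.mem_Icc]
        beta_reduce
        by_cases hneg : f.lam n < 0
        · rw [if_pos hneg]
          exact ⟨⟨hn1, hny.trans (Nat.div_le_self x q)⟩, hcop, hneg⟩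
        · rw [if_neg hneg]
          have hpos : 0 < f.lam n := lt_of_le_of_ne (not_lt.mp hneg) (Ne.symm hlam)
          have hlamqn : f.lam (q*n) = f.lam q * f.lam n := f.mult q n (hqn_cop n hqn)
          refine ⟨⟨by exact Nat.mul_pos (by omega) (by omega), ?_⟩, hqN_cop.mul hcop, ?_⟩
          · calc q*n ≤ q*y := Nat.mul_le_mul_left q hny
            _ ≤ x := hyq
          · rw [hlamqn]
            exact mul_neg_of_neg_of_pos hq_neg hpos
      · intro a ha b hb hab
        obtain ⟨ha1, hay, hacop, haq, halam⟩ := hGoodprop y a ha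
        obtain ⟨hb1, hby, hbcop, hbq, hblam⟩ := hGoodprop y b hb
        simp only at hab
        by_cases hpa : f.lam a < 0 <;> by_cases hpb : f.lam b < 0
        · rwa [if_pos hpa, if_pos hpb] at hab
        · rw [if_pos hpa, if_neg hpb] at hab
          exact absurd ⟨b, hab⟩ haq
        · rw [if_neg hpa, if_pos hpb] at hab
          exact absurd ⟨a, hab.symm⟩ hbq
        · rw [if_neg hpa, if_neg hpb] at hab
          exact Nat.eq_of_mul_eq_mul_left (by omega) hab
    calc 1/(16*(q:ℝ)*(W:ℝ)) * (x:ℝ) = ((x:ℝ)/(2*(q:ℝ)))/(8*W) := by ring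
      _ ≤ (y:ℝ)/(8*W) := by gcongr
      _ ≤ (((Finset.Icc 1 y).filter GoodP).card : ℝ) := hcount
      _ ≤ (((Finset.Icc 1 x).filter (fun n => Nat.Coprime n N ∧ f.lam n < 0)).card : ℝ) := by
          exact_mod_cast hinj
end

section
/- In the notation of the previous exercise, if β = 1 then r_1 = (τ/(2√2)) + O(min(1, 1/α²)), with an absolute implied constant; more precisely |r_1 − (τ/2)cos(4πt − π/4)| ≤ w(2α) + (1/2)w(4α) ≤ 3/(2π²α²) for α ≥ 1, and cos(4πt − π/4) = 1/√2 for integer t. -/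
open Real MeasureTheory intervalIntegral

lemma cont_tri_cos (c : ℝ) : Continuous (fun u : ℝ => (1 - |u|) * Real.cos (c*u)) := by
  fun_prop

lemma tri_cos_half (c : ℝ) (hc : c ≠ 0) :
    ∫ u in (0:ℝ)..1, (1 - |u|) * Real.cos (c*u) = (1 - Real.cos c)/c^2 := by
  have h1 : ∫ u in (0:ℝ)..1, (1 - |u|) * Real.cos (c*u)
      = ∫ u in (0:ℝ)..1, (1 - u) * Real.cos (c*u) := by
    apply integral_congr
    intro u hu
    rw [Set.uIcc_of_le (by norm_num)] at hu
    simp [abs_of_nonneg hu.1]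
  rw [h1]
  have key : ∀ x ∈ Set.uIcc (0:ℝ) 1,
      HasDerivAt (fun u => (1-u) * Real.sin (c*u)/c - Real.cos (c*u)/c^2)
        ((1-x) * Real.cos (c*x)) x := by
    intro x hx
    have h2 : HasDerivAt (fun u : ℝ => c*u) c x := by
      simpa using (hasDerivAt_id x).const_mul c
    have hs : HasDerivAt (fun u => Real.sin (c*u)) (Real.cos (c*x) * c) x :=
      (Real.hasDerivAt_sin (c*x)).comp x h2
    have hcc : HasDerivAt (fun u => Real.cos (c*u)) (-Real.sin (c*x) * c) x :=
      (Real.hasDerivAt_cos (c*x)).comp x h2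
    have h3 : HasDerivAt (fun u : ℝ => (1-u)) (-1) x := by
      simpa using (hasDerivAt_id x).const_sub 1
    have := ((h3.mul hs).div_const c).sub (hcc.div_const (c^2))
    refine this.congr_deriv ?_
    field_simp
    ring
  rw [integral_eq_sub_of_hasDerivAt key
    ((Continuous.intervalIntegrable (by fun_prop) 0 1))]
  simp
  field_simp
  ring

lemma tri_sin (c : ℝ) :
    ∫ u in (-1:ℝ)..1, (1 - |u|) * Real.sin (c*u) = 0 := by
  have hint : ∀ a b : ℝ, IntervalIntegrable (fun u : ℝ => (1 - |u|) * Real.sin (c*u)) volume a b :=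
    fun a b => Continuous.intervalIntegrable (by fun_prop) a b
  have hsplit := integral_add_adjacent_intervals (hint (-1) 0) (hint 0 1)
  have hneg : (∫ u in (0:ℝ)..1, (1 - |(-u)|) * Real.sin (c*(-u)))
      = ∫ u in (-1:ℝ)..(0:ℝ), (1 - |u|) * Real.sin (c*u) := by
    simpa using integral_comp_neg (a := 0) (b := 1) (fun u : ℝ => (1 - |u|) * Real.sin (c*u))
  have hodd : (∫ u in (0:ℝ)..1, (1 - |(-u)|) * Real.sin (c*(-u)))
      = - ∫ u in (0:ℝ)..1, (1 - |u|) * Real.sin (c*u) := by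
    rw [← intervalIntegral.integral_neg]
    apply integral_congr
    intro u hu
    simp
  linarith [hsplit, hneg ▸ hodd]

lemma tri_cos (c : ℝ) (hc : c ≠ 0) :
    ∫ u in (-1:ℝ)..1, (1 - |u|) * Real.cos (c*u) = 2*(1 - Real.cos c)/c^2 := by
  have hint : ∀ a b : ℝ, IntervalIntegrable (fun u : ℝ => (1 - |u|) * Real.cos (c*u)) volume a b :=
    fun a b => Continuous.intervalIntegrable (by fun_prop) a b
  have hsplit := integral_add_adjacent_intervals (hint (-1) 0) (hint 0 1)
  have hneg : (∫ u in (0:ℝ)..1, (1 - |(-u)|) * Real.cos (c*(-u)))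
      = ∫ u in (-1:ℝ)..(0:ℝ), (1 - |u|) * Real.cos (c*u) := by
    simpa using integral_comp_neg (a := 0) (b := 1) (fun u : ℝ => (1 - |u|) * Real.cos (c*u))
  have heven : (∫ u in (0:ℝ)..1, (1 - |(-u)|) * Real.cos (c*(-u)))
      = ∫ u in (0:ℝ)..1, (1 - |u|) * Real.cos (c*u) := by
    apply integral_congr
    intro u hu
    simp [mul_comm]
  rw [← hsplit, ← hneg, heven, tri_cos_half c hc]
  ring

lemma tri_one : ∫ u in (-1:ℝ)..1, (1 - |u|) = 1 := by
  have hint : ∀ a b : ℝ, IntervalIntegrable (fun u : ℝ => (1 - |u|)) volume a b :=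
    fun a b => Continuous.intervalIntegrable (by fun_prop) a b
  have hsplit := integral_add_adjacent_intervals (hint (-1) 0) (hint 0 1)
  have half : ∫ u in (0:ℝ)..1, (1 - |u|) = 1/2 := by
    have h1 : ∫ u in (0:ℝ)..1, (1 - |u|) = ∫ u in (0:ℝ)..1, (1 - u) := by
      apply integral_congr
      intro u hu
      rw [Set.uIcc_of_le (by norm_num)] at hu
      simp [abs_of_nonneg hu.1]
    rw [h1]
    rw [integral_sub intervalIntegrable_const (Continuous.intervalIntegrable (by fun_prop) 0 1)]
    simp
    norm_num
  have hneg : (∫ u in (0:ℝ)..1, (1 - |(-u)|))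
      = ∫ u in (-1:ℝ)..(0:ℝ), (1 - |u|) := by
    simpa using integral_comp_neg (a := 0) (b := 1) (fun u : ℝ => (1 - |u|))
  have heven : (∫ u in (0:ℝ)..1, (1 - |(-u)|)) = ∫ u in (0:ℝ)..1, (1 - |u|) := by
    simp
  rw [← hsplit, ← hneg, heven, half]
  norm_num


/-- The Fourier transform of the Fejér kernel `u ↦ 1 - |u|` on `[-1,1]`. -/
noncomputable def w (ξ : ℝ) : ℝ :=
  if ξ = 0 then 1 else (Real.sin (Real.pi * ξ) / (Real.pi * ξ)) ^ 2

lemma w_nonneg (ξ : ℝ) : 0 ≤ w ξ := by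
  unfold w; split
  · norm_num
  · positivity

lemma w_le (ξ : ℝ) (hξ : ξ ≠ 0) : w ξ ≤ 1/(Real.pi*ξ)^2 := by
  rw [w, if_neg hξ, div_pow]
  gcongr
  exact Real.sin_sq_le_one _

lemma sin_sq_half' (x : ℝ) : Real.sin (x/2) ^ 2 = (1 - Real.cos x) / 2 := by
  have h1 := Real.cos_sq (x/2)
  rw [show 2*(x/2) = x by ring] at h1
  have h2 := Real.sin_sq_add_cos_sq (x/2)
  nlinarith

set_option maxHeartbeats 1000000 in
theorem r_one_estimate (τ α : ℝ) (hτ : τ = 1 ∨ τ = -1) (hα : 1 ≤ α)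
    (t : ℕ) (ht : 0 < t) :
    |(∫ u in (-1:ℝ)..1, (1 - |u|) * (1 + τ * Real.cos (4 * Real.pi * α * u)) *
          Real.cos (4 * Real.pi * ((t : ℝ) + α * u) - Real.pi / 4))
        - τ / 2 * Real.cos (4 * Real.pi * (t : ℝ) - Real.pi / 4)|
      ≤ w (2 * α) + (1 / 2) * w (4 * α) ∧
    w (2 * α) + (1 / 2) * w (4 * α) ≤ 3 / (2 * Real.pi ^ 2 * α ^ 2) ∧
    Real.cos (4 * Real.pi * (t : ℝ) - Real.pi / 4) = 1 / Real.sqrt 2 := by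
  have hπ := Real.pi_pos
  have hα0 : (0:ℝ) < α := lt_of_lt_of_le one_pos hα
  have hs2 : Real.sqrt 2 * Real.sqrt 2 = 2 := Real.mul_self_sqrt (by norm_num)
  have hs2pos : (0:ℝ) < Real.sqrt 2 := Real.sqrt_pos.mpr (by norm_num)
  have hs2le : Real.sqrt 2 ≤ 2 := by nlinarith
  -- Part 3
  have hcos3 : Real.cos (4 * Real.pi * (t : ℝ) - Real.pi / 4) = 1 / Real.sqrt 2 := by
    have harg : 4 * Real.pi * (t : ℝ) - Real.pi / 4
        = (-(Real.pi/4)) + ((2*t : ℤ) : ℝ) * (2*Real.pi) := by push_cast; ring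
    rw [harg, Real.cos_add_int_mul_two_pi, Real.cos_neg, Real.cos_pi_div_four]
    rw [eq_div_iff (ne_of_gt hs2pos)]
    nlinarith
  -- Part 2
  have hpart2 : w (2 * α) + (1 / 2) * w (4 * α) ≤ 3 / (2 * Real.pi ^ 2 * α ^ 2) := by
    have h1 := w_le (2*α) (by positivity)
    have h2 := w_le (4*α) (by positivity)
    have e1 : 1/(Real.pi*(2*α))^2 = (1/(Real.pi^2*α^2))/4 := by ring
    have e2 : 1/(Real.pi*(4*α))^2 = (1/(Real.pi^2*α^2))/16 := by ring
    have hpos : (0:ℝ) < 1/(Real.pi^2*α^2) := by positivity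
    have : w (2*α) + (1/2) * w (4*α) ≤ (1/(Real.pi^2*α^2))/4 + (1/2)*((1/(Real.pi^2*α^2))/16) := by
      rw [← e1, ← e2]; gcongr
    refine this.trans ?_
    have e3 : 3/(2*Real.pi^2*α^2) = (3/2)*(1/(Real.pi^2*α^2)) := by
      field_simp
    rw [e3]
    linarith
  set θ : ℝ := 4 * Real.pi * α with hθdef
  have hθpos : 0 < θ := by positivity
  have hθ : θ ≠ 0 := ne_of_gt hθpos
  have h2θ : 2*θ ≠ 0 := by positivity
  set K1 : ℝ := τ * (Real.sqrt 2/2) / 2 with hK1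
  set K2 : ℝ := Real.sqrt 2/2 with hK2
  -- pointwise identity for the integrand
  have heq : ∀ u : ℝ, (1 - |u|) * (1 + τ * Real.cos (θ * u)) *
          Real.cos (4 * Real.pi * ((t : ℝ) + α * u) - Real.pi / 4)
      = K1 * (1 - |u|) + K2 * ((1 - |u|) * Real.cos (θ*u))
        + K2 * ((1 - |u|) * Real.sin (θ*u))
        + K1 * ((1 - |u|) * Real.cos (2*θ*u))
        + K1 * ((1 - |u|) * Real.sin (2*θ*u)) := by
    intro u
    have harg : 4 * Real.pi * ((t : ℝ) + α * u) - Real.pi / 4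
        = (θ * u - Real.pi/4) + ((2*t : ℤ) : ℝ) * (2*Real.pi) := by
      rw [hθdef]; push_cast; ring
    rw [harg, Real.cos_add_int_mul_two_pi, Real.cos_sub, Real.cos_pi_div_four,
      Real.sin_pi_div_four]
    have hc2 : Real.cos (2*θ*u) = 2 * Real.cos (θ*u)^2 - 1 := by
      rw [show 2*θ*u = 2*(θ*u) by ring, Real.cos_two_mul]
    have hsn2 : Real.sin (2*θ*u) = 2 * Real.sin (θ*u) * Real.cos (θ*u) := by
      rw [show 2*θ*u = 2*(θ*u) by ring, Real.sin_two_mul]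
    rw [hc2, hsn2, hK1, hK2]
    ring
  have i1 : IntervalIntegrable (fun u : ℝ => K1 * (1 - |u|)) volume (-1) 1 :=
    Continuous.intervalIntegrable (by fun_prop) _ _
  have i2 : IntervalIntegrable (fun u : ℝ => K2 * ((1 - |u|) * Real.cos (θ*u))) volume (-1) 1 :=
    Continuous.intervalIntegrable (by fun_prop) _ _
  have i3 : IntervalIntegrable (fun u : ℝ => K2 * ((1 - |u|) * Real.sin (θ*u))) volume (-1) 1 :=
    Continuous.intervalIntegrable (by fun_prop) _ _
  have i4 : IntervalIntegrable (fun u : ℝ => K1 * ((1 - |u|) * Real.cos (2*θ*u))) volume (-1) 1 :=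
    Continuous.intervalIntegrable (by fun_prop) _ _
  have i5 : IntervalIntegrable (fun u : ℝ => K1 * ((1 - |u|) * Real.sin (2*θ*u))) volume (-1) 1 :=
    Continuous.intervalIntegrable (by fun_prop) _ _
  have hI : (∫ u in (-1:ℝ)..1, (1 - |u|) * (1 + τ * Real.cos (θ * u)) *
          Real.cos (4 * Real.pi * ((t : ℝ) + α * u) - Real.pi / 4))
      = K1 + K2 * (2*(1 - Real.cos θ)/θ^2) + K1 * (2*(1 - Real.cos (2*θ))/(2*θ)^2) := by
    simp only [heq]
    rw [integral_add (((i1.add i2).add i3).add i4) i5,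
        integral_add ((i1.add i2).add i3) i4,
        integral_add (i1.add i2) i3,
        integral_add i1 i2,
        intervalIntegral.integral_const_mul, intervalIntegral.integral_const_mul, intervalIntegral.integral_const_mul,
        intervalIntegral.integral_const_mul, intervalIntegral.integral_const_mul,
        tri_one, tri_sin, tri_sin, tri_cos θ hθ, tri_cos (2*θ) h2θ]
    ring
  -- express the Fejér values through w
  have hw1 : 2*(1 - Real.cos θ)/θ^2 = w (2*α) := by
    rw [w, if_neg (by positivity : (2:ℝ)*α ≠ 0)]
    have harg : Real.pi * (2*α) = θ/2 := by rw [hθdef]; ring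
    rw [harg, div_pow, sin_sq_half']
    field_simp
  have hw2 : 2*(1 - Real.cos (2*θ))/(2*θ)^2 = w (4*α) := by
    rw [w, if_neg (by positivity : (4:ℝ)*α ≠ 0)]
    have harg : Real.pi * (4*α) = (2*θ)/2 := by rw [hθdef]; ring
    rw [harg, div_pow, sin_sq_half']
    field_simp
  refine ⟨?_, hpart2, hcos3⟩
  rw [hI, hcos3, hw1, hw2]
  have h12 : (1:ℝ)/Real.sqrt 2 = Real.sqrt 2/2 := by
    rw [div_eq_div_iff hs2pos.ne' (by norm_num : (2:ℝ) ≠ 0)]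
    linarith
  have hK1' : τ / 2 * (1 / Real.sqrt 2) = K1 := by
    rw [h12, hK1, hK2]; ring
  rw [← hK1']
  have hred : τ / 2 * (1 / Real.sqrt 2) + K2 * w (2*α) + τ / 2 * (1 / Real.sqrt 2) * w (4*α)
      - τ / 2 * (1 / Real.sqrt 2) = K2 * w (2*α) + τ / 2 * (1 / Real.sqrt 2) * w (4*α) := by
    ring
  rw [hred]
  have habsτ : |τ| = 1 := by rcases hτ with h | h <;> simp [h]
  have h1sq : (1:ℝ) ≤ Real.sqrt 2 := by nlinarith
  have h1s : 1/Real.sqrt 2 ≤ 1 := by rw [div_le_one hs2pos]; exact h1sq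
  have h1 : |K2 * w (2*α)| ≤ 1 * w (2*α) := by
    rw [abs_mul, abs_of_nonneg (w_nonneg _)]
    have hb : |K2| ≤ 1 := by
      rw [hK2, abs_of_nonneg (by positivity : (0:ℝ) ≤ Real.sqrt 2/2)]
      linarith
    exact mul_le_mul_of_nonneg_right hb (w_nonneg _)
  have ha : |τ/2 * (1/Real.sqrt 2)| ≤ 1/2 := by
    rcases hτ with h | h <;> rw [h]
    · rw [abs_of_nonneg (by positivity : (0:ℝ) ≤ (1:ℝ)/2 * (1/Real.sqrt 2))]
      nlinarith
    · rw [show (-1:ℝ)/2 * (1/Real.sqrt 2) = -((1:ℝ)/2 * (1/Real.sqrt 2)) by ring, abs_neg,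
        abs_of_nonneg (by positivity : (0:ℝ) ≤ (1:ℝ)/2 * (1/Real.sqrt 2))]
      nlinarith
  have h2 : |τ / 2 * (1 / Real.sqrt 2) * w (4*α)| ≤ (1/2) * w (4*α) := by
    rw [abs_mul, abs_of_nonneg (w_nonneg _)]
    exact mul_le_mul_of_nonneg_right ha (w_nonneg _)
  calc |K2 * w (2*α) + τ / 2 * (1 / Real.sqrt 2) * w (4*α)|
      ≤ |K2 * w (2*α)| + |τ / 2 * (1 / Real.sqrt 2) * w (4*α)| := abs_add_le _ _
    _ ≤ 1 * w (2*α) + (1/2) * w (4*α) := add_le_add h1 h2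
    _ = w (2*α) + (1/2) * w (4*α) := by ring
end

section
/- For any α ≥ 2 and any squarefree positive integer d ≥ 1, ∑_{n ≥ 1, n ≠ d} (d(n)/n^{3/4}) · min(1, d/(α² (√n − √d)²)) ≪ α^{−1/3} d^{1/4} log(2d), where d(n) is the divisor function and the implied constant is absolute. -/
open Finset Real
set_option maxHeartbeats 1000000

/-- Generic decreasing telescope bound. -/
lemma tele_le (u f : ℕ → ℝ) (m : ℕ) (hm : 0 < m)
    (h : ∀ i, m ≤ i → f i ≤ u i - u (i+1)) (hu : ∀ i, 0 ≤ u i) (M : ℕ) :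
    ∑ i ∈ Finset.Icc m M, f i ≤ u m := by
  have key : ∀ M : ℕ, ∑ i ∈ Finset.Icc m M, f i ≤ u m - u (max (M+1) m) := by
    intro M
    induction M with
    | zero =>
      rw [Finset.Icc_eq_empty (by omega)]
      simp only [Finset.sum_empty]
      have : max 1 m = m := by omega
      rw [this]; ring_nf; exact le_refl _
    | succ M ih =>
      rcases lt_or_ge (M+1) m with hlt | hge
      · rw [Finset.Icc_eq_empty (by omega)]
        simp only [Finset.sum_empty]
        have : max (M+1+1) m = m ∨ max (M+1+1) m = M+2 := by omega
        rcases this with h1 | h1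
        · rw [h1]; simp
        · rw [h1]
          have : M + 2 = m := by omega
          rw [this]; simp
      · rw [Finset.sum_Icc_succ_top hge]
        have h2 := h (M+1) hge
        have h3 : max (M+1) m = M+1 := by omega
        have h4 : max (M+1+1) m = M+2 := by omega
        rw [h3] at ih; rw [h4]
        have := ih
        linarith
  exact (key M).trans (by linarith [hu (max (M+1) m)])

/-- ∑_{i=m}^{M} 1/i² ≤ 2/m -/
lemma sum_inv_sq_le (m M : ℕ) (hm : 0 < m) :
    ∑ i ∈ Finset.Icc m M, ((i:ℝ)^2)⁻¹ ≤ 2 / m := by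
  have := tele_le (fun i => 2 / (i:ℝ)) (fun i => ((i:ℝ)^2)⁻¹) m hm ?_ ?_ M
  · exact this
  · intro i hi
    have hi1 : (1:ℝ) ≤ i := by exact_mod_cast hm.trans_le hi
    have h0 : (0:ℝ) < i := by linarith
    rw [div_sub_div _ _ (ne_of_gt h0) (by positivity)]
    rw [inv_le_iff_one_le_mul₀ (by positivity)]
    rw [div_mul_eq_mul_div, le_div_iff₀ (by positivity)]
    push_cast; nlinarith
  · intro i
    rcases Nat.eq_zero_or_pos i with h | h
    · simp [h]
    · positivity

lemma amgm_aux (y w : ℝ) (hy : 1 ≤ y) (hw0 : 0 ≤ w) (hw1 : w ≤ 1) :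
    (y-1) ^ w * y ^ (1-w) ≤ y - w := by
  have := Real.geom_mean_le_arith_mean2_weighted (w₁ := w) (w₂ := 1-w)
    (p₁ := y-1) (p₂ := y) hw0 (by linarith) (by linarith) (by linarith) (by ring)
  calc (y-1)^w * y^(1-w) ≤ w * (y-1) + (1-w) * y := this
    _ = y - w := by ring

lemma quarter_step (M : ℕ) :
    ((M+1:ℝ)) ^ (-(3:ℝ)/4) ≤ 4 * (((M+1:ℝ)) ^ ((1:ℝ)/4) - (M:ℝ) ^ ((1:ℝ)/4)) := by
  set y : ℝ := (M:ℝ) + 1 with hy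
  have hy1 : 1 ≤ y := by rw [hy]; linarith [(Nat.cast_nonneg M : (0:ℝ) ≤ (M:ℝ))]
  have hy0 : (0:ℝ) < y := by linarith
  have hexp : y ^ ((3:ℝ)/4) * y ^ ((1:ℝ)/4) = y := by
    rw [← Real.rpow_add hy0]; norm_num
  have hpos : (0:ℝ) < y ^ ((3:ℝ)/4) := Real.rpow_pos_of_pos hy0 _
  have key : y ^ ((3:ℝ)/4) * (y ^ ((1:ℝ)/4) - (y-1) ^ ((1:ℝ)/4)) ≥ 1/4 := by
    have h1 : y ^ ((3:ℝ)/4) * (y-1) ^ ((1:ℝ)/4) ≤ y - 1/4 := by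
      calc y ^ ((3:ℝ)/4) * (y-1) ^ ((1:ℝ)/4) = (y-1) ^ ((1:ℝ)/4) * y ^ (1 - (1:ℝ)/4) := by
            rw [mul_comm]; norm_num
        _ ≤ y - 1/4 := amgm_aux y (1/4) hy1 (by norm_num) (by norm_num)
    nlinarith [hexp]
  have hym : y - 1 = (M:ℝ) := by rw [hy]; ring
  rw [show (-(3:ℝ))/4 = -((3:ℝ)/4) by norm_num, Real.rpow_neg hy0.le,
    inv_le_iff_one_le_mul₀ hpos]
  rw [hym] at key
  nlinarith [key]

lemma sum_quarter (M : ℕ) :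
    ∑ b ∈ Finset.Icc 1 M, (b:ℝ) ^ (-(3:ℝ)/4) ≤ 4 * (M:ℝ) ^ ((1:ℝ)/4) := by
  induction M with
  | zero => simp
  | succ M ih =>
    rw [Finset.sum_Icc_succ_top (by omega)]
    push_cast
    have := quarter_step M
    push_cast at this
    linarith

lemma sum_harmonic (M : ℕ) :
    ∑ a ∈ Finset.Icc 1 M, ((a:ℝ))⁻¹ ≤ 1 + Real.log M := by
  induction M with
  | zero => simp
  | succ M ih =>
    rcases Nat.eq_zero_or_pos M with h | h
    · subst h; norm_num
    · rw [Finset.sum_Icc_succ_top (by omega)]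
      have hM0 : (0:ℝ) < M := by exact_mod_cast h
      have hstep : ((M:ℝ)+1)⁻¹ ≤ Real.log ((M:ℝ)+1) - Real.log M := by
        have h1 : Real.log ((M:ℝ)/((M:ℝ)+1)) ≤ (M:ℝ)/((M:ℝ)+1) - 1 :=
          Real.log_le_sub_one_of_pos (by positivity)
        rw [Real.log_div (ne_of_gt hM0) (by positivity)] at h1
        have h2 : (M:ℝ)/((M:ℝ)+1) - 1 = -(((M:ℝ)+1)⁻¹) := by field_simp; ring
        rw [h2] at h1; linarith
      have hlog : Real.log M ≥ 0 := Real.log_natCast_nonneg M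
      push_cast
      push_cast at ih
      linarith

lemma seven_quarter_step (i : ℕ) (hi : 2 ≤ i) :
    (i:ℝ) ^ (-(7:ℝ)/4) ≤ (4/3) * (((i:ℝ)-1) ^ (-(3:ℝ)/4) - (i:ℝ) ^ (-(3:ℝ)/4)) := by
  have hi2 : (2:ℝ) ≤ (i:ℝ) := by exact_mod_cast hi
  set x : ℝ := (i:ℝ) - 1 with hx
  set y : ℝ := (i:ℝ) with hyy
  have hx1 : (1:ℝ) ≤ x := by simp only [hx, hyy]; linarith
  have hy1 : (1:ℝ) ≤ y := by linarith
  have hx0 : (0:ℝ) < x := by linarith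
  have hy0 : (0:ℝ) < y := by linarith
  have h1 : x ^ ((3:ℝ)/4) * y ^ ((1:ℝ)/4) ≤ y - 3/4 := by
    have h := amgm_aux y (3/4) hy1 (by norm_num) (by norm_num)
    have hxy : y - 1 = x := by rw [hx]
    rw [hxy] at h; norm_num at h ⊢; exact h
  have hyq : y ^ ((1:ℝ)/4) * y ^ ((3:ℝ)/4) = y := by
    rw [← Real.rpow_add hy0]; norm_num
  have hy34 : (0:ℝ) < y ^ ((3:ℝ)/4) := Real.rpow_pos_of_pos hy0 _
  have hx34 : (0:ℝ) < x ^ ((3:ℝ)/4) := Real.rpow_pos_of_pos hx0 _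
  have hy74 : y ^ ((7:ℝ)/4) = y * y ^ ((3:ℝ)/4) := by
    rw [show (7:ℝ)/4 = 1 + (3:ℝ)/4 by norm_num, Real.rpow_one_add' hy0.le (by norm_num)]
  have hy74p : (0:ℝ) < y ^ ((7:ℝ)/4) := Real.rpow_pos_of_pos hy0 _
  have h2 : x ^ ((3:ℝ)/4) * y ≤ y ^ ((7:ℝ)/4) - (3/4) * y ^ ((3:ℝ)/4) := by
    have h := mul_le_mul_of_nonneg_right h1 (le_of_lt hy34)
    calc x ^ ((3:ℝ)/4) * y = x ^ ((3:ℝ)/4) * y ^ ((1:ℝ)/4) * y ^ ((3:ℝ)/4) := by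
          rw [mul_assoc, hyq]
      _ ≤ (y - 3/4) * y ^ ((3:ℝ)/4) := h
      _ = y * y ^ ((3:ℝ)/4) - (3/4) * y ^ ((3:ℝ)/4) := by ring
      _ = y ^ ((7:ℝ)/4) - (3/4) * y ^ ((3:ℝ)/4) := by rw [hy74]
  have h3 : x ^ ((3:ℝ)/4) ≤ y ^ ((3:ℝ)/4) :=
    Real.rpow_le_rpow (le_of_lt hx0) (by linarith) (by norm_num)
  -- main multiplied form : X*Y ≤ (4/3)*(Y-X)*Z
  have h5 : (3/4) * x ^ ((3:ℝ)/4) ≤ y * (y ^ ((3:ℝ)/4) - x ^ ((3:ℝ)/4)) := by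
    nlinarith [h2, hy74]
  have hmul : x ^ ((3:ℝ)/4) * y ^ ((3:ℝ)/4)
      ≤ (4/3) * (y ^ ((3:ℝ)/4) - x ^ ((3:ℝ)/4)) * y ^ ((7:ℝ)/4) := by
    nlinarith [mul_le_mul_of_nonneg_right h5 hy34.le, hy74]
  rw [show (-(7:ℝ))/4 = -((7:ℝ)/4) by norm_num, show (-(3:ℝ))/4 = -((3:ℝ)/4) by norm_num,
    Real.rpow_neg hy0.le, Real.rpow_neg hx0.le, Real.rpow_neg hy0.le]
  have e1 : (x ^ ((3:ℝ)/4))⁻¹ - (y ^ ((3:ℝ)/4))⁻¹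
      = (y ^ ((3:ℝ)/4) - x ^ ((3:ℝ)/4)) / (x ^ ((3:ℝ)/4) * y ^ ((3:ℝ)/4)) := by
    field_simp
  rw [e1, inv_eq_one_div, mul_div_assoc']
  rw [div_le_div_iff₀ hy74p (by positivity)]
  nlinarith [hmul]

/-- ∑_{b=m}^{M} b^(-7/4) ≤ (7/3) m^(-3/4) -/
lemma sum_seven_quarter (m M : ℕ) (hm : 0 < m) :
    ∑ b ∈ Finset.Icc m M, (b:ℝ) ^ (-(7:ℝ)/4) ≤ (7/3) * (m:ℝ) ^ (-(3:ℝ)/4) := by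
  have hm0 : (0:ℝ) < m := by exact_mod_cast hm
  have hm1 : (1:ℝ) ≤ m := by exact_mod_cast hm
  have hmain : ∑ b ∈ Finset.Icc (m+1) M, (b:ℝ) ^ (-(7:ℝ)/4) ≤ (4/3) * (m:ℝ) ^ (-(3:ℝ)/4) := by
    have key := tele_le (fun i => (4/3) * (((i-1:ℕ)):ℝ) ^ (-(3:ℝ)/4))
      (fun i => (i:ℝ) ^ (-(7:ℝ)/4)) (m+1) (by omega) ?_ ?_ M
    · simpa using key
    · intro i hi
      have h := seven_quarter_step i (by omega)
      have e1 : ((i-1:ℕ):ℝ) = (i:ℝ) - 1 := by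
        have : 1 ≤ i := by omega
        push_cast [this]; ring
      have e2 : ((i+1-1:ℕ):ℝ) = (i:ℝ) := by
        norm_num
      simp only [e1, e2]
      linarith
    · intro i
      show (0:ℝ) ≤ 4 / 3 * (((i-1:ℕ)):ℝ) ^ (-(3:ℝ)/4)
      have h := Real.rpow_nonneg (Nat.cast_nonneg (i-1)) (-(3:ℝ)/4)
      linarith
  rcases le_or_gt m M with hle | hlt
  · have hins : Finset.Icc m M = insert m (Finset.Icc (m+1) M) := by
      ext x; simp only [Finset.mem_Icc, Finset.mem_insert]; omega
    rw [hins, Finset.sum_insert (by simp)]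
    have hterm : (m:ℝ) ^ (-(7:ℝ)/4) ≤ (m:ℝ) ^ (-(3:ℝ)/4) :=
      Real.rpow_le_rpow_of_exponent_le hm1 (by norm_num)
    linarith
  · rw [Finset.Icc_eq_empty (by omega)]
    simp only [Finset.sum_empty]
    rw [show (-(3:ℝ))/4 = -((3:ℝ)/4) by norm_num, Real.rpow_neg hm0.le]
    positivity



section
variable (dummy : ℕ)

/-- ∑_{a=m}^{M} a^(-5/2) ≤ 2 m^(-3/2) -/
lemma sum_five_half (m M : ℕ) (hm : 0 < m) :
    ∑ a ∈ Finset.Icc m M, (a:ℝ) ^ (-(5:ℝ)/2) ≤ 2 * (m:ℝ) ^ (-(3:ℝ)/2) := by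
  have hm0 : (0:ℝ) < m := by exact_mod_cast hm
  have step : ∀ a ∈ Finset.Icc m M, (a:ℝ) ^ (-(5:ℝ)/2) ≤ (m:ℝ) ^ (-(1:ℝ)/2) * ((a:ℝ)^2)⁻¹ := by
    intro a ha
    rw [Finset.mem_Icc] at ha
    have ha0 : (0:ℝ) < a := by
      have : 0 < a := lt_of_lt_of_le hm ha.1
      exact_mod_cast this
    have hma : (m:ℝ) ≤ a := by exact_mod_cast ha.1
    have e1 : (a:ℝ) ^ (-(5:ℝ)/2) = (a:ℝ) ^ (-(1:ℝ)/2) * ((a:ℝ)^2)⁻¹ := by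
      rw [← Real.rpow_natCast (a:ℝ) 2, ← Real.rpow_neg ha0.le, ← Real.rpow_add ha0]
      norm_num
    rw [e1]
    have : (a:ℝ) ^ (-(1:ℝ)/2) ≤ (m:ℝ) ^ (-(1:ℝ)/2) := by
      rw [show (-(1:ℝ))/2 = -((1:ℝ)/2) by norm_num, Real.rpow_neg ha0.le, Real.rpow_neg hm0.le]
      apply inv_anti₀ (Real.rpow_pos_of_pos hm0 _)
      exact Real.rpow_le_rpow hm0.le hma (by norm_num)
    apply mul_le_mul_of_nonneg_right this (by positivity)
  calc ∑ a ∈ Finset.Icc m M, (a:ℝ) ^ (-(5:ℝ)/2)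
      ≤ ∑ a ∈ Finset.Icc m M, (m:ℝ) ^ (-(1:ℝ)/2) * ((a:ℝ)^2)⁻¹ := Finset.sum_le_sum step
    _ = (m:ℝ) ^ (-(1:ℝ)/2) * ∑ a ∈ Finset.Icc m M, ((a:ℝ)^2)⁻¹ := by rw [Finset.mul_sum]
    _ ≤ (m:ℝ) ^ (-(1:ℝ)/2) * (2/m) := by
        apply mul_le_mul_of_nonneg_left (sum_inv_sq_le m M hm) (Real.rpow_nonneg hm0.le _)
    _ = 2 * (m:ℝ) ^ (-(3:ℝ)/2) := by
        rw [show (2:ℝ)/(m:ℝ) = 2 * ((m:ℝ)^(1:ℕ))⁻¹ by rw [pow_one]; ring]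
        rw [← Real.rpow_natCast (m:ℝ) 1, ← Real.rpow_neg hm0.le, ← mul_assoc, mul_comm ((m:ℝ) ^ (-(1:ℝ)/2)) 2, mul_assoc, ← Real.rpow_add hm0]
        norm_num

lemma min_le_rpow_sixth {x : ℝ} (hx : 0 ≤ x) : min 1 x ≤ x ^ ((1:ℝ)/6) := by
  rcases le_or_gt x 1 with h | h
  · rcases eq_or_lt_of_le hx with h0 | h0
    · simp [← h0]
    · calc min 1 x ≤ x := min_le_right _ _
        _ = x ^ (1:ℝ) := (Real.rpow_one x).symm
        _ ≤ x ^ ((1:ℝ)/6) := Real.rpow_le_rpow_of_exponent_ge h0 h (by norm_num)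
  · calc min 1 x ≤ 1 := min_le_left _ _
      _ ≤ x ^ ((1:ℝ)/6) := Real.one_le_rpow h.le (by norm_num)

/-- reindex comparison for single sums -/
lemma sum_le_reindex (s t : Finset ℕ) (e : ℕ → ℕ) (φ ψ : ℕ → ℝ)
    (hinj : ∀ x ∈ s, ∀ y ∈ s, e x = e y → x = y)
    (hmem : ∀ b ∈ s, e b ∈ t) (hle : ∀ b ∈ s, φ b ≤ ψ (e b))
    (hψ : ∀ i ∈ t, 0 ≤ ψ i) :
    ∑ b ∈ s, φ b ≤ ∑ i ∈ t, ψ i := by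
  calc ∑ b ∈ s, φ b ≤ ∑ b ∈ s, ψ (e b) := Finset.sum_le_sum hle
    _ = ∑ i ∈ s.image e, ψ i := (Finset.sum_image hinj).symm
    _ ≤ ∑ i ∈ t, ψ i := by
        apply Finset.sum_le_sum_of_subset_of_nonneg
        · intro i hi
          rw [Finset.mem_image] at hi
          obtain ⟨b, hb, rfl⟩ := hi
          exact hmem b hb
        · intro i hi _; exact hψ i hi

/-- master helper: sum over an index set bounded by an iterated sigma sum -/
lemma sum_le_sigma_sum {ι : Type} [DecidableEq ι] (S : Finset ι) (e₁ e₂ : ι → ℕ)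
    (F : ι → ℝ) (A : Finset ℕ) (B : ℕ → Finset ℕ) (f : ℕ → ℕ → ℝ)
    (hf : ∀ a ∈ A, ∀ b ∈ B a, 0 ≤ f a b)
    (hinj : ∀ x ∈ S, ∀ y ∈ S, e₁ x = e₁ y → e₂ x = e₂ y → x = y)
    (hmem : ∀ x ∈ S, e₁ x ∈ A ∧ e₂ x ∈ B (e₁ x))
    (hval : ∀ x ∈ S, F x ≤ f (e₁ x) (e₂ x)) :
    ∑ x ∈ S, F x ≤ ∑ a ∈ A, ∑ b ∈ B a, f a b := by
  have h1 : ∑ x ∈ S, F x ≤ ∑ x ∈ S, f (e₁ x) (e₂ x) := Finset.sum_le_sum hval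
  have h2 : ∑ x ∈ S, f (e₁ x) (e₂ x)
      = ∑ y ∈ S.image (fun x => ((⟨e₁ x, e₂ x⟩ : (_ : ℕ) × ℕ))), f y.1 y.2 := by
    rw [Finset.sum_image]
    intro x hx y hy h
    have h1' : e₁ x = e₁ y := congrArg Sigma.fst h
    have h2' : e₂ x = e₂ y := by
      have := congrArg Sigma.snd h
      simpa using this
    exact hinj x hx y hy h1' h2'
  have h3 : S.image (fun x => ((⟨e₁ x, e₂ x⟩ : (_ : ℕ) × ℕ))) ⊆ A.sigma B := by
    intro y hy
    rw [Finset.mem_image] at hy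
    obtain ⟨x, hx, rfl⟩ := hy
    rw [Finset.mem_sigma]
    exact ⟨(hmem x hx).1, (hmem x hx).2⟩
  calc ∑ x ∈ S, F x ≤ ∑ x ∈ S, f (e₁ x) (e₂ x) := h1
    _ = ∑ y ∈ S.image (fun x => ((⟨e₁ x, e₂ x⟩ : (_ : ℕ) × ℕ))), f y.1 y.2 := h2
    _ ≤ ∑ y ∈ A.sigma B, f y.1 y.2 := by
        apply Finset.sum_le_sum_of_subset_of_nonneg h3
        intro y hy _
        rw [Finset.mem_sigma] at hy
        exact hf y.1 hy.1 y.2 hy.2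
    _ = ∑ a ∈ A, ∑ b ∈ B a, f a b := by rw [Finset.sum_sigma]

end
/-- ∑_{i=1}^{M} min(1, C²/i²) ≤ 3C -/
lemma sum_min_le (C : ℝ) (hC : 0 ≤ C) (M : ℕ) :
    ∑ i ∈ Finset.Icc 1 M, min 1 (C^2 / (i:ℝ)^2) ≤ 3 * C := by
  rw [← Finset.sum_filter_add_sum_filter_not (Finset.Icc 1 M) (fun i : ℕ => (i:ℝ) ≤ C)]
  have hfloor : ((Nat.floor C : ℕ):ℝ) ≤ C := Nat.floor_le hC
  have part1 : ∑ i ∈ (Finset.Icc 1 M).filter (fun i : ℕ => (i:ℝ) ≤ C), min 1 (C^2/(i:ℝ)^2) ≤ C := by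
    calc ∑ i ∈ (Finset.Icc 1 M).filter (fun i : ℕ => (i:ℝ) ≤ C), min 1 (C^2/(i:ℝ)^2)
        ≤ ∑ i ∈ (Finset.Icc 1 M).filter (fun i : ℕ => (i:ℝ) ≤ C), 1 :=
          Finset.sum_le_sum (fun i _ => min_le_left _ _)
      _ = ((Finset.Icc 1 M).filter (fun i : ℕ => (i:ℝ) ≤ C)).card := by simp
      _ ≤ ((Finset.Icc 1 (Nat.floor C)).card : ℝ) := by
          apply Nat.cast_le.mpr
          apply Finset.card_le_card
          intro i hi
          simp only [Finset.mem_filter, Finset.mem_Icc] at hi ⊢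
          exact ⟨hi.1.1, Nat.le_floor hi.2⟩
      _ = (Nat.floor C : ℝ) := by rw [Nat.card_Icc]; simp
      _ ≤ C := hfloor
  have part2 : ∑ i ∈ (Finset.Icc 1 M).filter (fun i : ℕ => ¬ ((i:ℝ) ≤ C)), min 1 (C^2/(i:ℝ)^2)
      ≤ 2 * C := by
    set m : ℕ := Nat.floor C + 1 with hmdef
    have hmC : C < (m:ℝ) := by
      rw [hmdef]; push_cast; exact Nat.lt_floor_add_one C
    have hm1 : 0 < m := by omega
    calc ∑ i ∈ (Finset.Icc 1 M).filter (fun i : ℕ => ¬ ((i:ℝ) ≤ C)), min 1 (C^2/(i:ℝ)^2)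
        ≤ ∑ i ∈ Finset.Icc m M, C^2 * ((i:ℝ)^2)⁻¹ := by
          apply sum_le_reindex _ _ (fun i => i)
          · intro x _ y _ h; exact h
          · intro i hi
            simp only [Finset.mem_filter, Finset.mem_Icc, not_le] at hi ⊢
            constructor
            · have h1 : ((Nat.floor C : ℕ):ℝ) < (i:ℝ) := lt_of_le_of_lt hfloor hi.2
              have h2 : Nat.floor C < i := by exact_mod_cast h1
              omega
            · exact hi.1.2
          · intro i _
            rw [div_eq_mul_inv]
            exact min_le_right _ _
          · intro i _; positivity
      _ = C^2 * ∑ i ∈ Finset.Icc m M, ((i:ℝ)^2)⁻¹ := by rw [Finset.mul_sum]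
      _ ≤ C^2 * (2/m) := by
          apply mul_le_mul_of_nonneg_left (sum_inv_sq_le m M hm1) (by positivity)
      _ ≤ 2 * C := by
          have hm0 : (0:ℝ) < m := by exact_mod_cast hm1
          rw [mul_comm, div_mul_eq_mul_div, div_le_iff₀ hm0]
          nlinarith [hmC, hC]
  linarith

lemma min_div_mono {c D e : ℝ} (he : 0 < e) (h : e ≤ D^2) :
    min 1 (c^2 / D^2) ≤ min 1 (c^2 / e) := by
  apply min_le_min (le_refl 1)
  apply div_le_div_of_nonneg_left (by positivity) he h

/-- pointwise bound for progression terms -/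
lemma prog_point (c : ℝ) (hc : 0 ≤ c) (a i : ℕ) (ha : 0 < a) (D : ℝ)
    (h : ((max 1 (a*i) : ℕ):ℝ) ≤ D ∨ ((max 1 (a*i) : ℕ):ℝ) ≤ -D ∨ D = 0) :
    min 1 (c^2 / D^2) ≤ (if i = 0 then min 1 (c^2) else min 1 ((c/a)^2/(i:ℝ)^2)) := by
  have ha0 : (0:ℝ) < a := by exact_mod_cast ha
  rcases h with h | h | h
  case _ | _ =>
    all_goals {
    have hsq : (((max 1 (a*i) : ℕ):ℝ))^2 ≤ D^2 := by
      have hn : (1:ℝ) ≤ ((max 1 (a*i) : ℕ):ℝ) := by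
        have : (1:ℕ) ≤ max 1 (a*i) := le_max_left _ _
        exact_mod_cast this
      nlinarith [h, hn]
    rcases Nat.eq_zero_or_pos i with hi0 | hip
    · rw [if_pos hi0]
      have h1 : (1:ℝ) ≤ D^2 := by
        have : ((max 1 (a*i) : ℕ):ℝ) ≥ 1 := by
          have : (1:ℕ) ≤ max 1 (a*i) := le_max_left _ _
          exact_mod_cast this
        nlinarith
      have := min_div_mono (c := c) (D := D) (e := 1) one_pos h1
      simpa using this
    · rw [if_neg (by omega)]
      have hmax : (max 1 (a*i) : ℕ) = a*i := by
        have : 1 ≤ a*i := Nat.one_le_iff_ne_zero.mpr (by positivity)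
        omega
      rw [hmax] at hsq
      have hai : (0:ℝ) < ((a*i:ℕ):ℝ) := by
        have : 0 < a*i := by positivity
        exact_mod_cast this
      have h2 := min_div_mono (c := c) (D := D) (e := (((a*i:ℕ)):ℝ)^2) (by positivity) hsq
      apply le_trans h2
      apply le_of_eq
      congr 1
      push_cast
      rw [div_pow]
      rw [mul_pow]
      rw [div_div]
      }
  · rw [h]
    have : min 1 (c^2/(0:ℝ)^2) = 0 := by
      norm_num
    rw [this]
    split
    · exact le_min (by norm_num) (by positivity)
    · exact le_min (by norm_num) (by positivity)

/-- key progression lemma -/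
lemma sum_prog_le (a d M : ℕ) (ha : 0 < a) (c : ℝ) (hc : 0 ≤ c) :
    ∑ b ∈ Finset.Icc 1 M, min 1 (c^2 / (((a*b:ℕ):ℝ) - ((d:ℕ):ℝ))^2)
      ≤ 2 * min 1 (c^2) + 6 * (c / a) := by
  have ha0 : (0:ℝ) < a := by exact_mod_cast ha
  have hC0 : 0 ≤ c / a := by positivity
  obtain ⟨q, hr, hrlt⟩ : ∃ q : ℕ, a * q ≤ d ∧ d < a * q + a := by
    refine ⟨d / a, Nat.mul_div_le d a, ?_⟩
    have h1 := Nat.div_add_mod d a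
    have h2 := Nat.mod_lt d ha
    omega
  set Mb : ℕ := q + M with hMb
  set ψ : ℕ → ℝ := fun i => if i = 0 then min 1 (c^2) else min 1 ((c/a)^2/(i:ℝ)^2) with hψdef
  have hψ0 : ∀ i, 0 ≤ ψ i := by
    intro i
    simp only [hψdef]
    split
    · exact le_min (by norm_num) (by positivity)
    · exact le_min (by norm_num) (by positivity)
  have hψsum : ∑ i ∈ Finset.Icc 0 Mb, ψ i ≤ min 1 (c^2) + 3 * (c/a) := by
    have hins : Finset.Icc 0 Mb = insert 0 (Finset.Icc 1 Mb) := by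
      ext x; simp only [Finset.mem_Icc, Finset.mem_insert]; omega
    rw [hins, Finset.sum_insert (by simp)]
    have e0 : ψ 0 = min 1 (c^2) := by simp [hψdef]
    have e1 : ∑ i ∈ Finset.Icc 1 Mb, ψ i = ∑ i ∈ Finset.Icc 1 Mb, min 1 ((c/a)^2/(i:ℝ)^2) := by
      apply Finset.sum_congr rfl
      intro i hi
      rw [Finset.mem_Icc] at hi
      simp only [hψdef]
      rw [if_neg (by omega)]
    rw [e0, e1]
    have := sum_min_le (c/a) hC0 Mb
    linarith
  rw [← Finset.sum_filter_add_sum_filter_not (Finset.Icc 1 M) (fun b => b ≤ q)]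
  have lower : ∑ b ∈ (Finset.Icc 1 M).filter (fun b => b ≤ q),
      min 1 (c^2 / (((a*b:ℕ):ℝ) - ((d:ℕ):ℝ))^2) ≤ min 1 (c^2) + 3 * (c/a) := by
    apply le_trans ?_ hψsum
    apply sum_le_reindex _ _ (fun b => q - b) _ ψ
    · intro x hx y hy h
      simp only [Finset.mem_filter, Finset.mem_Icc] at hx hy
      omega
    · intro b hb
      simp only [Finset.mem_filter, Finset.mem_Icc] at hb ⊢
      omega
    · intro b hb
      simp only [Finset.mem_filter, Finset.mem_Icc] at hb
      obtain ⟨⟨hb1, hbM⟩, hbq⟩ := hb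
      simp only [hψdef]
      apply prog_point c hc a (q - b) ha
      rcases eq_or_ne (a*b) d with heq | hne
      · right; right
        rw [heq]; ring
      · right; left
        have hnat : a * b + max 1 (a * (q-b)) ≤ d := by
          have e : a * b + a * (q - b) = a * q := by
            rw [← Nat.mul_add]; congr 1; omega
          have hlt : a * b < d := by
            rcases Nat.lt_or_ge (a*b) d with h | h
            · exact h
            · exfalso; apply hne; omega
          omega
        have h2 := (Nat.cast_le (α := ℝ)).mpr hnat
        push_cast at h2 ⊢
        linarith
    · intro i _; exact hψ0 i
  have upper : ∑ b ∈ (Finset.Icc 1 M).filter (fun b => ¬ (b ≤ q)),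
      min 1 (c^2 / (((a*b:ℕ):ℝ) - ((d:ℕ):ℝ))^2) ≤ min 1 (c^2) + 3 * (c/a) := by
    apply le_trans ?_ hψsum
    apply sum_le_reindex _ _ (fun b => b - q - 1) _ ψ
    · intro x hx y hy h
      simp only [Finset.mem_filter, Finset.mem_Icc, not_le] at hx hy
      omega
    · intro b hb
      simp only [Finset.mem_filter, Finset.mem_Icc, not_le] at hb ⊢
      omega
    · intro b hb
      simp only [Finset.mem_filter, Finset.mem_Icc, not_le] at hb
      obtain ⟨⟨hb1, hbM⟩, hbq⟩ := hb
      simp only [hψdef]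
      apply prog_point c hc a (b - q - 1) ha
      left
      have hnat : d + max 1 (a * (b - q - 1)) ≤ a * b := by
        have e : a * b = a * q + a * 1 + a * (b - q - 1) := by
          rw [← Nat.mul_add, ← Nat.mul_add]
          congr 1
          omega
        have h1 : 1 + a * (b - q - 1) ≥ max 1 (a * (b - q - 1)) := by omega
        omega
      have h2 := (Nat.cast_le (α := ℝ)).mpr hnat
      push_cast at h2 ⊢
      linarith
    · intro i _; exact hψ0 i
  linarith
noncomputable def gfun (α : ℝ) (d n : ℕ) : ℝ :=
  if n = 0 ∨ n = d then 0
  else ((n:ℝ) ^ ((3:ℝ)/4))⁻¹ * min 1 ((d:ℝ) / (α^2 * (Real.sqrt n - Real.sqrt d)^2))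

lemma gfun_nonneg (α : ℝ) (d n : ℕ) : 0 ≤ gfun α d n := by
  rw [gfun]
  split
  · exact le_refl 0
  · apply mul_nonneg
    · positivity
    · exact le_min (by norm_num) (by positivity)

lemma sqrt_diff_id (n d : ℕ) :
    (Real.sqrt n - Real.sqrt d)^2 * (Real.sqrt n + Real.sqrt d)^2 = ((n:ℝ) - (d:ℝ))^2 := by
  have h1 := Real.sq_sqrt (Nat.cast_nonneg n)
  have h2 := Real.sq_sqrt (Nat.cast_nonneg d)
  nlinarith [h1, h2]

lemma R1 (α : ℝ) (hα : 2 ≤ α) (d n : ℕ) (hn : 0 < n) (h : 2*n ≤ d) :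
    gfun α d n ≤ 16 * (α^2)⁻¹ * (n:ℝ) ^ (-(3:ℝ)/4) := by
  have hd : 0 < d := by omega
  have hα0 : (0:ℝ) < α := by linarith
  rw [gfun, if_neg (by push_neg; constructor <;> omega)]
  have hsn0 := Real.sqrt_nonneg (n:ℝ)
  have hsd0 := Real.sqrt_nonneg (d:ℝ)
  have hdr : (2:ℝ)*n ≤ d := by exact_mod_cast h
  have hnr : (1:ℝ) ≤ n := by exact_mod_cast hn
  have hdd : (0:ℝ) < d := by exact_mod_cast hd
  have hle : Real.sqrt n ≤ Real.sqrt d := Real.sqrt_le_sqrt (by linarith)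
  have hid := sqrt_diff_id n d
  have hsd2 := Real.sq_sqrt (Nat.cast_nonneg d)
  have hsn2 := Real.sq_sqrt (Nat.cast_nonneg n)
  have hsum_sq : (Real.sqrt n + Real.sqrt d)^2 ≤ 4*d := by nlinarith
  have hdiff : ((n:ℝ)-d)^2 ≥ (d:ℝ)^2/4 := by nlinarith
  have hBpos : (0:ℝ) < (Real.sqrt n + Real.sqrt d)^2 := by nlinarith
  have key : (d:ℝ)/16 ≤ (Real.sqrt n - Real.sqrt d)^2 := by
    have hA0 : (0:ℝ) ≤ (Real.sqrt n - Real.sqrt d)^2 := sq_nonneg _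
    nlinarith [mul_nonneg hA0 (by linarith : (0:ℝ) ≤ 4*d - (Real.sqrt n + Real.sqrt d)^2)]
  have hApos : (0:ℝ) < (Real.sqrt n - Real.sqrt d)^2 := by linarith [hdd]
  have hX : (d:ℝ) / (α^2 * (Real.sqrt n - Real.sqrt d)^2) ≤ 16/α^2 := by
    rw [div_le_div_iff₀ (by positivity) (by positivity)]
    nlinarith [key, sq_nonneg α]
  have hmin : min 1 ((d:ℝ) / (α^2 * (Real.sqrt n - Real.sqrt d)^2)) ≤ 16/α^2 :=
    le_trans (min_le_right _ _) hX
  rw [show (-(3:ℝ))/4 = -((3:ℝ)/4) by norm_num, Real.rpow_neg (Nat.cast_nonneg n)]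
  have hinv : (0:ℝ) ≤ ((n:ℝ) ^ ((3:ℝ)/4))⁻¹ := by positivity
  calc ((n:ℝ) ^ ((3:ℝ)/4))⁻¹ * min 1 ((d:ℝ) / (α^2 * (Real.sqrt n - Real.sqrt d)^2))
      ≤ ((n:ℝ) ^ ((3:ℝ)/4))⁻¹ * (16/α^2) := mul_le_mul_of_nonneg_left hmin hinv
    _ = 16 * (α^2)⁻¹ * ((n:ℝ) ^ ((3:ℝ)/4))⁻¹ := by ring
lemma R2 (α : ℝ) (hα : 2 ≤ α) (d n : ℕ) (hd : 0 < d) (hn : 0 < n)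
    (hl : d < 2*n) (hr : n ≤ 2*d) :
    gfun α d n ≤ 2 * (d:ℝ) ^ (-(3:ℝ)/4)
      * min 1 ((3*(d:ℝ)/α)^2 / (((n:ℕ):ℝ) - ((d:ℕ):ℝ))^2) := by
  have hα0 : (0:ℝ) < α := by linarith
  have hdd : (0:ℝ) < d := by exact_mod_cast hd
  have hnn : (0:ℝ) < n := by exact_mod_cast hn
  have hfac : ((n:ℝ) ^ ((3:ℝ)/4))⁻¹ ≤ 2 * (d:ℝ) ^ (-(3:ℝ)/4) := by
    have h2n : (d:ℝ) < 2*n := by exact_mod_cast hl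
    have h1 : (d:ℝ)/2 ≤ (n:ℝ) := by linarith
    have h2 : ((d:ℝ)/2) ^ ((3:ℝ)/4) ≤ (n:ℝ) ^ ((3:ℝ)/4) :=
      Real.rpow_le_rpow (by positivity) h1 (by norm_num)
    have h3 : (0:ℝ) < ((d:ℝ)/2) ^ ((3:ℝ)/4) := Real.rpow_pos_of_pos (by positivity) _
    have h4 : ((n:ℝ) ^ ((3:ℝ)/4))⁻¹ ≤ (((d:ℝ)/2) ^ ((3:ℝ)/4))⁻¹ := by
      apply inv_anti₀ h3 h2
    apply le_trans h4
    rw [Real.div_rpow hdd.le (by norm_num), show (-(3:ℝ))/4 = -((3:ℝ)/4) by norm_num,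
      Real.rpow_neg hdd.le]
    rw [inv_div]
    rw [div_le_iff₀ (Real.rpow_pos_of_pos hdd _)]
    have h5 : (2:ℝ) ^ ((3:ℝ)/4) ≤ 2 := by
      calc (2:ℝ) ^ ((3:ℝ)/4) ≤ (2:ℝ) ^ (1:ℝ) :=
            Real.rpow_le_rpow_of_exponent_le (by norm_num) (by norm_num)
        _ = 2 := Real.rpow_one 2
    calc (2:ℝ) ^ ((3:ℝ)/4) ≤ 2 := h5
      _ = 2 * ((d:ℝ) ^ ((3:ℝ)/4))⁻¹ * (d:ℝ) ^ ((3:ℝ)/4) := by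
          field_simp
  rcases eq_or_ne n d with heq | hne
  · rw [gfun, if_pos (Or.inr heq)]
    apply mul_nonneg
    · apply mul_nonneg (by norm_num) (Real.rpow_nonneg hdd.le _)
    · exact le_min (by norm_num) (by positivity)
  · rw [gfun, if_neg (by push_neg; exact ⟨by omega, hne⟩)]
    have hsn0 := Real.sqrt_nonneg (n:ℝ)
    have hsd0 := Real.sqrt_nonneg (d:ℝ)
    have hsn2 := Real.sq_sqrt (Nat.cast_nonneg n)
    have hsd2 := Real.sq_sqrt (Nat.cast_nonneg d)
    have hid := sqrt_diff_id n d
    have hnr : (n:ℝ) ≤ 2*d := by exact_mod_cast hr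
    have hBle : (Real.sqrt n + Real.sqrt d)^2 ≤ 9*d := by nlinarith
    have hnd : ((n:ℝ) - d)^2 > 0 := by
      have : (n:ℝ) ≠ d := by exact_mod_cast (fun h => hne (by exact_mod_cast h))
      have : (n:ℝ) - d ≠ 0 := sub_ne_zero_of_ne this
      positivity
    have hApos : (0:ℝ) < (Real.sqrt n - Real.sqrt d)^2 := by
      rcases eq_or_lt_of_le (sq_nonneg (Real.sqrt n - Real.sqrt d)) with h0 | h0
      · exfalso
        rw [← h0] at hid
        simp at hid
        nlinarith
      · exact h0
    have hX : (d:ℝ) / (α^2 * (Real.sqrt n - Real.sqrt d)^2)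
        ≤ (3*(d:ℝ)/α)^2 / (((n:ℕ):ℝ) - ((d:ℕ):ℝ))^2 := by
      rw [div_le_div_iff₀ (by positivity) hnd]
      have e1 : (3*(d:ℝ)/α)^2 = 9*(d:ℝ)^2/α^2 := by ring
      rw [e1]
      -- goal: d * (n-d)^2 ≤ 9d²/α² * (α² A) = 9 d² A
      have e2 : 9*(d:ℝ)^2/α^2 * (α^2 * (Real.sqrt n - Real.sqrt d)^2)
          = 9*(d:ℝ)^2 * (Real.sqrt n - Real.sqrt d)^2 := by
        field_simp
      rw [e2]
      -- (n-d)² = A*B ≤ A*9d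
      have h6 : ((n:ℝ) - d)^2 ≤ (Real.sqrt n - Real.sqrt d)^2 * (9*(d:ℝ)) := by
        rw [← hid]
        apply mul_le_mul_of_nonneg_left hBle (sq_nonneg _)
      nlinarith [h6, hdd]
    have hmin : min 1 ((d:ℝ) / (α^2 * (Real.sqrt n - Real.sqrt d)^2))
        ≤ min 1 ((3*(d:ℝ)/α)^2 / (((n:ℕ):ℝ) - ((d:ℕ):ℝ))^2) :=
      min_le_min (le_refl 1) hX
    apply mul_le_mul hfac hmin (le_min (by norm_num) (by positivity))
    apply mul_nonneg (by norm_num) (Real.rpow_nonneg hdd.le _)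

lemma R3 (α : ℝ) (hα : 2 ≤ α) (d n : ℕ) (hd : 0 < d) (h : 2*d < n) :
    gfun α d n ≤ 16 * (d:ℝ) * (α^2)⁻¹ * (n:ℝ) ^ (-(7:ℝ)/4) := by
  have hα0 : (0:ℝ) < α := by linarith
  have hdd : (0:ℝ) < d := by exact_mod_cast hd
  have hn : 0 < n := by omega
  have hnn : (0:ℝ) < n := by exact_mod_cast hn
  rw [gfun, if_neg (by push_neg; constructor <;> omega)]
  have hsn0 := Real.sqrt_nonneg (n:ℝ)
  have hsd0 := Real.sqrt_nonneg (d:ℝ)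
  have hsn2 := Real.sq_sqrt (Nat.cast_nonneg n)
  have hsd2 := Real.sq_sqrt (Nat.cast_nonneg d)
  have hid := sqrt_diff_id n d
  have h2d : (2:ℝ)*d < n := by exact_mod_cast h
  have hle : Real.sqrt d ≤ Real.sqrt n := Real.sqrt_le_sqrt (by linarith)
  have hBle : (Real.sqrt n + Real.sqrt d)^2 ≤ 4*n := by nlinarith
  have hdiff : ((n:ℝ)-d)^2 ≥ (n:ℝ)^2/4 := by
    have h7 : (n:ℝ)/2 ≤ (n:ℝ) - d := by linarith
    nlinarith [h7, hnn]
  have key : (n:ℝ)/16 ≤ (Real.sqrt n - Real.sqrt d)^2 := by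
    have hA0 : (0:ℝ) ≤ (Real.sqrt n - Real.sqrt d)^2 := sq_nonneg _
    nlinarith [mul_nonneg hA0 (by linarith : (0:ℝ) ≤ 4*n - (Real.sqrt n + Real.sqrt d)^2)]
  have hApos : (0:ℝ) < (Real.sqrt n - Real.sqrt d)^2 := by linarith [hnn]
  have hX : (d:ℝ) / (α^2 * (Real.sqrt n - Real.sqrt d)^2) ≤ 16*(d:ℝ)/(α^2*n) := by
    rw [div_le_div_iff₀ (by positivity) (by positivity)]
    nlinarith [mul_le_mul_of_nonneg_left key (by positivity : (0:ℝ) ≤ 16*(d:ℝ)*α^2)]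
  have hmin : min 1 ((d:ℝ) / (α^2 * (Real.sqrt n - Real.sqrt d)^2)) ≤ 16*(d:ℝ)/(α^2*n) :=
    le_trans (min_le_right _ _) hX
  have hinv : (0:ℝ) ≤ ((n:ℝ) ^ ((3:ℝ)/4))⁻¹ := by positivity
  calc ((n:ℝ) ^ ((3:ℝ)/4))⁻¹ * min 1 ((d:ℝ) / (α^2 * (Real.sqrt n - Real.sqrt d)^2))
      ≤ ((n:ℝ) ^ ((3:ℝ)/4))⁻¹ * (16*(d:ℝ)/(α^2*n)) := mul_le_mul_of_nonneg_left hmin hinv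
    _ = 16 * (d:ℝ) * (α^2)⁻¹ * (((n:ℝ) ^ ((3:ℝ)/4))⁻¹ * ((n:ℝ))⁻¹) := by
        field_simp
    _ = 16 * (d:ℝ) * (α^2)⁻¹ * (n:ℝ) ^ (-(7:ℝ)/4) := by
        congr 1
        rw [show (-(7:ℝ))/4 = -((3:ℝ)/4) + -1 by norm_num, Real.rpow_add hnn,
          Real.rpow_neg hnn.le, Real.rpow_neg hnn.le, Real.rpow_one]

/-- divisor count vs small divisors -/
lemma card_divisors_le (n : ℕ) :
    n.divisors.card ≤ 2 * ((n.divisors.filter (fun a => a*a ≤ n)).card) := by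
  rcases Nat.eq_zero_or_pos n with h0 | hn
  · subst h0; simp
  classical
  have hsplit := Finset.card_filter_add_card_filter_not
    (s := n.divisors) (p := fun a => a*a ≤ n)
  have hneg : ((n.divisors.filter (fun a => ¬ (a*a ≤ n))).card)
      ≤ ((n.divisors.filter (fun a => a*a ≤ n)).card) := by
    apply Finset.card_le_card_of_injOn (fun a => n / a)
    · intro a ha
      simp only [Finset.mem_coe, Finset.mem_filter, Nat.mem_divisors, not_le] at ha ⊢
      obtain ⟨⟨hdvd, hne⟩, hgt⟩ := ha
      have ha0 : 0 < a := Nat.pos_of_dvd_of_pos hdvd hn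
      obtain ⟨b, hb⟩ := hdvd
      have hdivb : n / a = b := by rw [hb]; exact Nat.mul_div_cancel_left b ha0
      refine ⟨⟨?_, hne⟩, ?_⟩
      · rw [hdivb]; exact ⟨a, by rw [hb]; ring⟩
      · rw [hdivb]
        by_contra hcon
        push_neg at hcon
        have hb0 : 0 < b := by
          rcases Nat.eq_zero_or_pos b with h | h
          · subst h; simp at hb; omega
          · exact h
        nlinarith [hb, hgt, hcon]
    · intro a ha b hb hab
      simp only [Finset.coe_filter, Set.mem_setOf_eq, Nat.mem_divisors] at ha hb
      dsimp only at hab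
      have h1 : n / (n / a) = a := Nat.div_div_self ha.1.1 (by omega)
      have h2 : n / (n / b) = b := Nat.div_div_self hb.1.1 (by omega)
      have h3 := congrArg (fun t => n / t) hab
      rw [h1, h2] at h3
      exact h3
  omega
lemma partial_le_pairs (α : ℝ) (d N : ℕ) :
    ∑ n ∈ Finset.range N, (n.divisors.card : ℝ) * gfun α d n
      ≤ 2 * ∑ a ∈ Finset.Icc 1 N, ∑ b ∈ Finset.Icc a N, gfun α d (a*b) := by
  classical
  have step1 : ∑ n ∈ Finset.range N, (n.divisors.card : ℝ) * gfun α d n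
      ≤ ∑ n ∈ Finset.range N,
        2 * (((n.divisors.filter (fun a => a*a ≤ n)).card : ℝ) * gfun α d n) := by
    apply Finset.sum_le_sum
    intro n _
    rw [← mul_assoc]
    apply mul_le_mul_of_nonneg_right ?_ (gfun_nonneg α d n)
    have := card_divisors_le n
    exact_mod_cast this
  have step2 : ∑ n ∈ Finset.range N,
        2 * (((n.divisors.filter (fun a => a*a ≤ n)).card : ℝ) * gfun α d n)
      = 2 * ∑ n ∈ Finset.range N,
          ∑ a ∈ n.divisors.filter (fun a => a*a ≤ n), gfun α d n := by
    rw [← Finset.mul_sum]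
    congr 1
    apply Finset.sum_congr rfl
    intro n _
    rw [Finset.sum_const, nsmul_eq_mul]
  have step3 : ∑ n ∈ Finset.range N,
        ∑ a ∈ n.divisors.filter (fun a => a*a ≤ n), gfun α d n
      ≤ ∑ a ∈ Finset.Icc 1 N, ∑ b ∈ Finset.Icc a N, gfun α d (a*b) := by
    rw [Finset.sum_sigma' (Finset.range N) (fun n => n.divisors.filter (fun a => a*a ≤ n))
      (fun n _ => gfun α d n)]
    apply sum_le_sigma_sum _ (fun x => x.2) (fun x => x.1 / x.2)
    · intro a _ b _; exact gfun_nonneg α d _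
    · intro x hx y hy h1 h2
      rw [Finset.mem_sigma, Finset.mem_filter, Nat.mem_divisors] at hx hy
      have hx1 : x.2 * (x.1 / x.2) = x.1 := Nat.mul_div_cancel' hx.2.1.1
      have hy1 : y.2 * (y.1 / y.2) = y.1 := Nat.mul_div_cancel' hy.2.1.1
      have : x.1 = y.1 := by rw [← hx1, h2, h1, hy1]
      obtain ⟨x1, x2⟩ := x
      obtain ⟨y1, y2⟩ := y
      simp only at h1 h2 this
      subst this; subst h1
      rfl
    · intro x hx
      rw [Finset.mem_sigma, Finset.mem_filter, Nat.mem_divisors] at hx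
      obtain ⟨hn, ⟨hdvd, hne⟩, hsq⟩ := hx
      rw [Finset.mem_range] at hn
      have hnpos : 0 < x.1 := Nat.pos_of_ne_zero hne
      have hapos : 0 < x.2 := Nat.pos_of_dvd_of_pos hdvd hnpos
      have haleb : x.2 ≤ x.1 := Nat.le_of_dvd hnpos hdvd
      have hb : x.2 * (x.1 / x.2) = x.1 := Nat.mul_div_cancel' hdvd
      constructor
      · rw [Finset.mem_Icc]; omega
      · rw [Finset.mem_Icc]
        have hble : x.1 / x.2 ≤ x.1 := Nat.div_le_self _ _
        constructor
        · -- a ≤ b : from a*a ≤ n = a*b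
          have : x.2 * x.2 ≤ x.2 * (x.1 / x.2) := by rw [hb]; exact hsq
          exact Nat.le_of_mul_le_mul_left this hapos
        · omega
    · intro x hx
      rw [Finset.mem_sigma, Finset.mem_filter, Nat.mem_divisors] at hx
      have hb : x.2 * (x.1 / x.2) = x.1 := Nat.mul_div_cancel' hx.2.1.1
      rw [hb]
  calc ∑ n ∈ Finset.range N, (n.divisors.card : ℝ) * gfun α d n
      ≤ ∑ n ∈ Finset.range N,
          2 * (((n.divisors.filter (fun a => a*a ≤ n)).card : ℝ) * gfun α d n) := step1
    _ = 2 * ∑ n ∈ Finset.range N,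
          ∑ a ∈ n.divisors.filter (fun a => a*a ≤ n), gfun α d n := step2
    _ ≤ 2 * ∑ a ∈ Finset.Icc 1 N, ∑ b ∈ Finset.Icc a N, gfun α d (a*b) := by
        apply mul_le_mul_of_nonneg_left step3 (by norm_num)
lemma aux_inv34 (a : ℕ) (ha : 0 < a) :
    (a:ℝ)^(-(3:ℝ)/4) * (((a:ℝ))^((1:ℝ)/4))⁻¹ = ((a:ℝ))⁻¹ := by
  have ha0 : (0:ℝ) < a := by exact_mod_cast ha
  rw [← Real.rpow_neg ha0.le, ← Real.rpow_add ha0]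
  norm_num
  exact Real.rpow_neg_one _

lemma log_nat_le (m d : ℕ) (hm : 0 < m) (h : m ≤ 2*d) : Real.log m ≤ Real.log (2*d) := by
  have hm0 : (0:ℝ) < m := by exact_mod_cast hm
  apply Real.log_le_log hm0
  exact_mod_cast h

lemma region1_le (α : ℝ) (hα : 2 ≤ α) (d N : ℕ) (hd : 0 < d) :
    ∑ x ∈ ((Finset.Icc 1 N).sigma (fun a => Finset.Icc a N)).filter
        (fun x => 2*(x.1*x.2) ≤ d),
      (16*(α^2)⁻¹ * ((x.1:ℝ)^(-(3:ℝ)/4) * (x.2:ℝ)^(-(3:ℝ)/4)))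
    ≤ 64 * (α^2)⁻¹ * (d:ℝ)^((1:ℝ)/4) * (1 + Real.log (2*d)) := by
  classical
  have hα0 : (0:ℝ) < α := by linarith
  have hdd : (0:ℝ) < d := by exact_mod_cast hd
  have step1 : ∑ x ∈ ((Finset.Icc 1 N).sigma (fun a => Finset.Icc a N)).filter
        (fun x => 2*(x.1*x.2) ≤ d),
      (16*(α^2)⁻¹ * ((x.1:ℝ)^(-(3:ℝ)/4) * (x.2:ℝ)^(-(3:ℝ)/4)))
    ≤ ∑ a ∈ Finset.Icc 1 (Nat.sqrt d), ∑ b ∈ Finset.Icc 1 (d/(2*a)),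
        (16*(α^2)⁻¹ * ((a:ℝ)^(-(3:ℝ)/4) * (b:ℝ)^(-(3:ℝ)/4))) := by
    apply sum_le_sigma_sum _ (fun x => x.1) (fun x => x.2)
    · intro a _ b _
      have h1 := Real.rpow_nonneg (Nat.cast_nonneg a) (-(3:ℝ)/4)
      have h2 := Real.rpow_nonneg (Nat.cast_nonneg b) (-(3:ℝ)/4)
      positivity
    · intro x hx y hy h1 h2
      obtain ⟨x1, x2⟩ := x; obtain ⟨y1, y2⟩ := y
      simp only at h1 h2
      subst h1; subst h2; rfl
    · intro x hx
      rw [Finset.mem_filter, Finset.mem_sigma, Finset.mem_Icc, Finset.mem_Icc] at hx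
      obtain ⟨⟨⟨ha1, haN⟩, hab, hbN⟩, hcond⟩ := hx
      constructor
      · rw [Finset.mem_Icc]
        refine ⟨ha1, ?_⟩
        rw [Nat.le_sqrt]
        have h1 : x.1 * x.1 ≤ x.1 * x.2 := Nat.mul_le_mul_left _ hab
        omega
      · rw [Finset.mem_Icc]
        refine ⟨by omega, ?_⟩
        rw [Nat.le_div_iff_mul_le (by omega : 0 < 2*x.1)]
        have : x.2 * (2 * x.1) = 2*(x.1*x.2) := by ring
        omega
    · intro x _; exact le_refl _
  apply le_trans step1
  have inner : ∀ a ∈ Finset.Icc 1 (Nat.sqrt d),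
      ∑ b ∈ Finset.Icc 1 (d/(2*a)), (16*(α^2)⁻¹ * ((a:ℝ)^(-(3:ℝ)/4) * (b:ℝ)^(-(3:ℝ)/4)))
        ≤ 64 * (α^2)⁻¹ * (d:ℝ)^((1:ℝ)/4) * ((a:ℝ))⁻¹ := by
    intro a ha
    rw [Finset.mem_Icc] at ha
    have ha0 : (0:ℝ) < a := by exact_mod_cast ha.1
    have hra := Real.rpow_nonneg (Nat.cast_nonneg a) (-(3:ℝ)/4)
    have e1 : ∑ b ∈ Finset.Icc 1 (d/(2*a)), (16*(α^2)⁻¹ * ((a:ℝ)^(-(3:ℝ)/4) * (b:ℝ)^(-(3:ℝ)/4)))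
        = 16*(α^2)⁻¹ * (a:ℝ)^(-(3:ℝ)/4) * ∑ b ∈ Finset.Icc 1 (d/(2*a)), (b:ℝ)^(-(3:ℝ)/4) := by
      rw [Finset.mul_sum]
      apply Finset.sum_congr rfl
      intro b _; ring
    rw [e1]
    have h2 : ∑ b ∈ Finset.Icc 1 (d/(2*a)), (b:ℝ)^(-(3:ℝ)/4)
        ≤ 4 * (((d/(2*a):ℕ)):ℝ)^((1:ℝ)/4) := sum_quarter _
    have h3 : (((d/(2*a):ℕ)):ℝ)^((1:ℝ)/4) ≤ ((d:ℝ)/a)^((1:ℝ)/4) := by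
      apply Real.rpow_le_rpow (Nat.cast_nonneg _) ?_ (by norm_num)
      calc (((d/(2*a):ℕ)):ℝ) ≤ (d:ℝ)/((2*a:ℕ):ℝ) := Nat.cast_div_le
        _ = (d:ℝ)/(2*(a:ℝ)) := by push_cast; ring
        _ ≤ (d:ℝ)/(a:ℝ) := by
            apply div_le_div_of_nonneg_left hdd.le ha0 (by linarith)
    calc 16*(α^2)⁻¹ * (a:ℝ)^(-(3:ℝ)/4) * ∑ b ∈ Finset.Icc 1 (d/(2*a)), (b:ℝ)^(-(3:ℝ)/4)
        ≤ 16*(α^2)⁻¹ * (a:ℝ)^(-(3:ℝ)/4) * (4 * ((d:ℝ)/a)^((1:ℝ)/4)) := by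
          apply mul_le_mul_of_nonneg_left (le_trans h2 (by linarith)) (by positivity)
      _ = 64 * (α^2)⁻¹ * (d:ℝ)^((1:ℝ)/4) * ((a:ℝ))⁻¹ := by
          rw [Real.div_rpow hdd.le ha0.le]
          rw [div_eq_mul_inv ((d:ℝ)^((1:ℝ)/4)) _]
          rw [← aux_inv34 a (by omega)]
          ring
  calc ∑ a ∈ Finset.Icc 1 (Nat.sqrt d), ∑ b ∈ Finset.Icc 1 (d/(2*a)),
        (16*(α^2)⁻¹ * ((a:ℝ)^(-(3:ℝ)/4) * (b:ℝ)^(-(3:ℝ)/4)))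
      ≤ ∑ a ∈ Finset.Icc 1 (Nat.sqrt d), 64 * (α^2)⁻¹ * (d:ℝ)^((1:ℝ)/4) * ((a:ℝ))⁻¹ :=
        Finset.sum_le_sum inner
    _ = 64 * (α^2)⁻¹ * (d:ℝ)^((1:ℝ)/4) * ∑ a ∈ Finset.Icc 1 (Nat.sqrt d), ((a:ℝ))⁻¹ := by
        rw [← Finset.mul_sum]
    _ ≤ 64 * (α^2)⁻¹ * (d:ℝ)^((1:ℝ)/4) * (1 + Real.log (2*d)) := by
        apply mul_le_mul_of_nonneg_left ?_ (by positivity)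
        apply le_trans (sum_harmonic _)
        have h4 : Real.log (Nat.sqrt d) ≤ Real.log (2*d) := by
          rcases Nat.eq_zero_or_pos (Nat.sqrt d) with h | h
          · rw [h]
            simp only [Nat.cast_zero, Real.log_zero]
            apply Real.log_nonneg
            have h5 : (1:ℝ) ≤ (d:ℝ) := by exact_mod_cast hd
            push_cast
            linarith
          · exact log_nat_le (Nat.sqrt d) d h (by nlinarith [Nat.sqrt_le_self d])
        linarith
lemma rpow_anti (x y p : ℝ) (hy : 0 < y) (hxy : y ≤ x) (hp : 0 ≤ p) : x^(-p) ≤ y^(-p) := by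
  rw [Real.rpow_neg (by linarith), Real.rpow_neg hy.le]
  exact inv_anti₀ (Real.rpow_pos_of_pos hy p) (Real.rpow_le_rpow hy.le hxy hp)

lemma region2_le (α : ℝ) (hα : 2 ≤ α) (d N : ℕ) (hd : 0 < d) :
    ∑ x ∈ ((Finset.Icc 1 N).sigma (fun a => Finset.Icc a N)).filter
        (fun x => d < 2*(x.1*x.2) ∧ x.1*x.2 ≤ 2*d),
      (2*(d:ℝ)^(-(3:ℝ)/4) * min 1 ((3*(d:ℝ)/α)^2 / (((x.1*x.2:ℕ):ℝ) - ((d:ℕ):ℝ))^2))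
    ≤ 4*(d:ℝ)^(-(3:ℝ)/4) * min 1 ((3*(d:ℝ)/α)^2) * ((Nat.sqrt (2*d):ℕ):ℝ)
      + 12*(d:ℝ)^(-(3:ℝ)/4) * (3*(d:ℝ)/α) * (1 + Real.log (2*d)) := by
  classical
  have hα0 : (0:ℝ) < α := by linarith
  have hdd : (0:ℝ) < d := by exact_mod_cast hd
  have hc0 : (0:ℝ) ≤ 3*(d:ℝ)/α := by positivity
  have hd34 : (0:ℝ) ≤ (d:ℝ)^(-(3:ℝ)/4) := Real.rpow_nonneg hdd.le _
  have step1 : ∑ x ∈ ((Finset.Icc 1 N).sigma (fun a => Finset.Icc a N)).filter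
        (fun x => d < 2*(x.1*x.2) ∧ x.1*x.2 ≤ 2*d),
      (2*(d:ℝ)^(-(3:ℝ)/4) * min 1 ((3*(d:ℝ)/α)^2 / (((x.1*x.2:ℕ):ℝ) - ((d:ℕ):ℝ))^2))
    ≤ ∑ a ∈ Finset.Icc 1 (Nat.sqrt (2*d)), ∑ b ∈ Finset.Icc 1 N,
      (2*(d:ℝ)^(-(3:ℝ)/4) * min 1 ((3*(d:ℝ)/α)^2 / (((a*b:ℕ):ℝ) - ((d:ℕ):ℝ))^2)) := by
    apply sum_le_sigma_sum _ (fun x => x.1) (fun x => x.2)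
    · intro a _ b _
      apply mul_nonneg (by positivity)
      exact le_min (by norm_num) (by positivity)
    · intro x hx y hy h1 h2
      obtain ⟨x1, x2⟩ := x; obtain ⟨y1, y2⟩ := y
      simp only at h1 h2
      subst h1; subst h2; rfl
    · intro x hx
      rw [Finset.mem_filter, Finset.mem_sigma, Finset.mem_Icc, Finset.mem_Icc] at hx
      obtain ⟨⟨⟨ha1, haN⟩, hab, hbN⟩, hc1, hc2⟩ := hx
      constructor
      · rw [Finset.mem_Icc]
        refine ⟨ha1, ?_⟩
        rw [Nat.le_sqrt]
        have h1 : x.1 * x.1 ≤ x.1 * x.2 := Nat.mul_le_mul_left _ hab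
        omega
      · rw [Finset.mem_Icc]; omega
    · intro x _; exact le_refl _
  apply le_trans step1
  have inner : ∀ a ∈ Finset.Icc 1 (Nat.sqrt (2*d)),
      ∑ b ∈ Finset.Icc 1 N,
        (2*(d:ℝ)^(-(3:ℝ)/4) * min 1 ((3*(d:ℝ)/α)^2 / (((a*b:ℕ):ℝ) - ((d:ℕ):ℝ))^2))
      ≤ 4*(d:ℝ)^(-(3:ℝ)/4) * min 1 ((3*(d:ℝ)/α)^2)
        + 12*(d:ℝ)^(-(3:ℝ)/4) * (3*(d:ℝ)/α) * ((a:ℝ))⁻¹ := by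
    intro a ha
    rw [Finset.mem_Icc] at ha
    have ha0 : 0 < a := ha.1
    have har : (0:ℝ) < a := by exact_mod_cast ha0
    rw [← Finset.mul_sum]
    have h1 := sum_prog_le a d N ha0 (3*(d:ℝ)/α) hc0
    calc 2*(d:ℝ)^(-(3:ℝ)/4) * ∑ b ∈ Finset.Icc 1 N,
          min 1 ((3*(d:ℝ)/α)^2 / (((a*b:ℕ):ℝ) - ((d:ℕ):ℝ))^2)
        ≤ 2*(d:ℝ)^(-(3:ℝ)/4) * (2 * min 1 ((3*(d:ℝ)/α)^2) + 6 * ((3*(d:ℝ)/α) / a)) := by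
          apply mul_le_mul_of_nonneg_left h1 (by positivity)
      _ = 4*(d:ℝ)^(-(3:ℝ)/4) * min 1 ((3*(d:ℝ)/α)^2)
          + 12*(d:ℝ)^(-(3:ℝ)/4) * (3*(d:ℝ)/α) * ((a:ℝ))⁻¹ := by
          rw [div_eq_mul_inv (3*(d:ℝ)/α) (a:ℝ)]
          ring
  calc ∑ a ∈ Finset.Icc 1 (Nat.sqrt (2*d)), ∑ b ∈ Finset.Icc 1 N,
        (2*(d:ℝ)^(-(3:ℝ)/4) * min 1 ((3*(d:ℝ)/α)^2 / (((a*b:ℕ):ℝ) - ((d:ℕ):ℝ))^2))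
      ≤ ∑ a ∈ Finset.Icc 1 (Nat.sqrt (2*d)),
        (4*(d:ℝ)^(-(3:ℝ)/4) * min 1 ((3*(d:ℝ)/α)^2)
          + 12*(d:ℝ)^(-(3:ℝ)/4) * (3*(d:ℝ)/α) * ((a:ℝ))⁻¹) := Finset.sum_le_sum inner
    _ = (4*(d:ℝ)^(-(3:ℝ)/4) * min 1 ((3*(d:ℝ)/α)^2)) * ((Nat.sqrt (2*d):ℕ):ℝ)
        + 12*(d:ℝ)^(-(3:ℝ)/4) * (3*(d:ℝ)/α) * ∑ a ∈ Finset.Icc 1 (Nat.sqrt (2*d)), ((a:ℝ))⁻¹ := by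
        rw [Finset.sum_add_distrib, Finset.sum_const, ← Finset.mul_sum, nsmul_eq_mul,
          Nat.card_Icc]
        have he : Nat.sqrt (2*d) + 1 - 1 = Nat.sqrt (2*d) := by omega
        rw [he, mul_comm]
    _ ≤ 4*(d:ℝ)^(-(3:ℝ)/4) * min 1 ((3*(d:ℝ)/α)^2) * ((Nat.sqrt (2*d):ℕ):ℝ)
        + 12*(d:ℝ)^(-(3:ℝ)/4) * (3*(d:ℝ)/α) * (1 + Real.log (2*d)) := by
        have hmin0 : (0:ℝ) ≤ min 1 ((3*(d:ℝ)/α)^2) := le_min (by norm_num) (by positivity)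
        have h5 : ∑ a ∈ Finset.Icc 1 (Nat.sqrt (2*d)), ((a:ℝ))⁻¹ ≤ 1 + Real.log (2*d) := by
          apply le_trans (sum_harmonic _)
          have h4 : Real.log (Nat.sqrt (2*d)) ≤ Real.log (2*d) := by
            rcases Nat.eq_zero_or_pos (Nat.sqrt (2*d)) with h | h
            · rw [h]
              simp only [Nat.cast_zero, Real.log_zero]
              apply Real.log_nonneg
              have h5 : (1:ℝ) ≤ (d:ℝ) := by exact_mod_cast hd
              push_cast
              linarith
            · exact log_nat_le (Nat.sqrt (2*d)) d h (Nat.sqrt_le_self _)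
          linarith
        apply add_le_add (le_refl _)
        apply mul_le_mul_of_nonneg_left h5 (by positivity)
lemma region3_le (α : ℝ) (hα : 2 ≤ α) (d N : ℕ) (hd : 0 < d) :
    ∑ x ∈ ((Finset.Icc 1 N).sigma (fun a => Finset.Icc a N)).filter
        (fun x => 2*d < x.1*x.2),
      (16*(d:ℝ)*(α^2)⁻¹ * ((x.1:ℝ)^(-(7:ℝ)/4) * (x.2:ℝ)^(-(7:ℝ)/4)))
    ≤ 16*(d:ℝ)*(α^2)⁻¹*(7/3) * ((2*(d:ℝ))^(-(3:ℝ)/4) * (3 + Real.log (2*d))) := by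
  classical
  have hα0 : (0:ℝ) < α := by linarith
  have hdd : (0:ℝ) < d := by exact_mod_cast hd
  have h2d0 : (0:ℝ) < 2*(d:ℝ) := by linarith
  have hd1 : (1:ℝ) ≤ (d:ℝ) := by exact_mod_cast hd
  set K := Nat.sqrt (2*d) with hK
  have step1 : ∑ x ∈ ((Finset.Icc 1 N).sigma (fun a => Finset.Icc a N)).filter
        (fun x => 2*d < x.1*x.2),
      (16*(d:ℝ)*(α^2)⁻¹ * ((x.1:ℝ)^(-(7:ℝ)/4) * (x.2:ℝ)^(-(7:ℝ)/4)))
    ≤ ∑ a ∈ Finset.Icc 1 N, ∑ b ∈ Finset.Icc (max a (2*d/a + 1)) N,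
        (16*(d:ℝ)*(α^2)⁻¹ * ((a:ℝ)^(-(7:ℝ)/4) * (b:ℝ)^(-(7:ℝ)/4))) := by
    apply sum_le_sigma_sum _ (fun x => x.1) (fun x => x.2)
    · intro a _ b _
      have h1 := Real.rpow_nonneg (Nat.cast_nonneg a) (-(7:ℝ)/4)
      have h2 := Real.rpow_nonneg (Nat.cast_nonneg b) (-(7:ℝ)/4)
      positivity
    · intro x hx y hy h1 h2
      obtain ⟨x1, x2⟩ := x; obtain ⟨y1, y2⟩ := y
      simp only at h1 h2
      subst h1; subst h2; rfl
    · intro x hx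
      rw [Finset.mem_filter, Finset.mem_sigma, Finset.mem_Icc, Finset.mem_Icc] at hx
      obtain ⟨⟨⟨ha1, haN⟩, hab, hbN⟩, hcond⟩ := hx
      refine ⟨by rw [Finset.mem_Icc]; omega, ?_⟩
      rw [Finset.mem_Icc]
      refine ⟨?_, hbN⟩
      apply max_le hab
      have h1 : 2*d/x.1 < x.2 := by
        rw [Nat.div_lt_iff_lt_mul (by omega : 0 < x.1)]
        calc 2*d < x.1*x.2 := hcond
          _ = x.2 * x.1 := by ring
      omega
    · intro x _; exact le_refl _
  apply le_trans step1
  -- per-a bound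
  have inner : ∀ a ∈ Finset.Icc 1 N,
      ∑ b ∈ Finset.Icc (max a (2*d/a + 1)) N,
        (16*(d:ℝ)*(α^2)⁻¹ * ((a:ℝ)^(-(7:ℝ)/4) * (b:ℝ)^(-(7:ℝ)/4)))
      ≤ 16*(d:ℝ)*(α^2)⁻¹*(7/3)
          * ((a:ℝ)^(-(7:ℝ)/4) * ((max a (2*d/a + 1) : ℕ):ℝ)^(-(3:ℝ)/4)) := by
    intro a ha
    rw [Finset.mem_Icc] at ha
    have ha1 : 0 < a := ha.1
    have hra := Real.rpow_nonneg (Nat.cast_nonneg a) (-(7:ℝ)/4)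
    have e1 : ∑ b ∈ Finset.Icc (max a (2*d/a + 1)) N,
        (16*(d:ℝ)*(α^2)⁻¹ * ((a:ℝ)^(-(7:ℝ)/4) * (b:ℝ)^(-(7:ℝ)/4)))
        = 16*(d:ℝ)*(α^2)⁻¹ * (a:ℝ)^(-(7:ℝ)/4)
            * ∑ b ∈ Finset.Icc (max a (2*d/a + 1)) N, (b:ℝ)^(-(7:ℝ)/4) := by
      rw [Finset.mul_sum]
      apply Finset.sum_congr rfl
      intro b _; ring
    rw [e1]
    have h2 := sum_seven_quarter (max a (2*d/a + 1)) N (by omega)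
    calc 16*(d:ℝ)*(α^2)⁻¹ * (a:ℝ)^(-(7:ℝ)/4)
          * ∑ b ∈ Finset.Icc (max a (2*d/a + 1)) N, (b:ℝ)^(-(7:ℝ)/4)
        ≤ 16*(d:ℝ)*(α^2)⁻¹ * (a:ℝ)^(-(7:ℝ)/4)
          * ((7/3) * ((max a (2*d/a + 1) : ℕ):ℝ)^(-(3:ℝ)/4)) := by
          apply mul_le_mul_of_nonneg_left h2 (by positivity)
      _ = 16*(d:ℝ)*(α^2)⁻¹*(7/3)
          * ((a:ℝ)^(-(7:ℝ)/4) * ((max a (2*d/a + 1) : ℕ):ℝ)^(-(3:ℝ)/4)) := by ring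
  apply le_trans (Finset.sum_le_sum inner)
  -- now bound  Σ_a  (a)^(-7/4) * (max)^(-3/4)
  have key : ∑ a ∈ Finset.Icc 1 N,
      ((a:ℝ)^(-(7:ℝ)/4) * ((max a (2*d/a + 1) : ℕ):ℝ)^(-(3:ℝ)/4))
      ≤ (2*(d:ℝ))^(-(3:ℝ)/4) * (3 + Real.log (2*d)) := by
    rw [← Finset.sum_filter_add_sum_filter_not (Finset.Icc 1 N) (fun a => a ≤ K)]
    have hsmall : ∑ a ∈ (Finset.Icc 1 N).filter (fun a => a ≤ K),
        ((a:ℝ)^(-(7:ℝ)/4) * ((max a (2*d/a + 1) : ℕ):ℝ)^(-(3:ℝ)/4))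
        ≤ (2*(d:ℝ))^(-(3:ℝ)/4) * (1 + Real.log (2*d)) := by
      have point : ∀ a ∈ (Finset.Icc 1 N).filter (fun a => a ≤ K),
          (a:ℝ)^(-(7:ℝ)/4) * ((max a (2*d/a + 1) : ℕ):ℝ)^(-(3:ℝ)/4)
          ≤ (2*(d:ℝ))^(-(3:ℝ)/4) * ((a:ℝ))⁻¹ := by
        intro a hmem
        rw [Finset.mem_filter, Finset.mem_Icc] at hmem
        have ha1 : 0 < a := hmem.1.1
        have har : (0:ℝ) < a := by exact_mod_cast ha1
        have hmaxge : (2*(d:ℝ))/a ≤ ((max a (2*d/a + 1) : ℕ):ℝ) := by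
          have h1 : 2*d < a * (2*d/a + 1) := by
            have := Nat.div_add_mod (2*d) a
            have := Nat.mod_lt (2*d) ha1
            nlinarith [Nat.div_add_mod (2*d) a, Nat.mod_lt (2*d) ha1]
          have h2 : (2*(d:ℝ)) < (a:ℝ) * ((2*d/a + 1 : ℕ):ℝ) := by
            have := (Nat.cast_lt (α := ℝ)).mpr h1
            push_cast at this ⊢
            linarith
          have h3 : ((2*d/a + 1 : ℕ):ℝ) ≤ ((max a (2*d/a + 1) : ℕ):ℝ) := by
            have : 2*d/a + 1 ≤ max a (2*d/a + 1) := le_max_right _ _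
            exact_mod_cast this
          rw [div_le_iff₀ har]
          nlinarith
        have hmax0 : (0:ℝ) < (2*(d:ℝ))/a := by positivity
        have h4 : ((max a (2*d/a + 1) : ℕ):ℝ)^(-(3:ℝ)/4) ≤ ((2*(d:ℝ))/a)^(-(3:ℝ)/4) := by
          rw [show (-(3:ℝ))/4 = -((3:ℝ)/4) by norm_num]
          exact rpow_anti _ _ _ hmax0 hmaxge (by norm_num)
        have h5 : ((2*(d:ℝ))/a)^(-(3:ℝ)/4) = (2*(d:ℝ))^(-(3:ℝ)/4) * (a:ℝ)^((3:ℝ)/4) := by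
          rw [show (-(3:ℝ))/4 = -((3:ℝ)/4) by norm_num, Real.rpow_neg (by positivity),
            Real.div_rpow h2d0.le har.le, Real.rpow_neg h2d0.le]
          field_simp
        calc (a:ℝ)^(-(7:ℝ)/4) * ((max a (2*d/a + 1) : ℕ):ℝ)^(-(3:ℝ)/4)
            ≤ (a:ℝ)^(-(7:ℝ)/4) * ((2*(d:ℝ))/a)^(-(3:ℝ)/4) := by
              apply mul_le_mul_of_nonneg_left h4 (Real.rpow_nonneg har.le _)
          _ = (2*(d:ℝ))^(-(3:ℝ)/4) * ((a:ℝ)^(-(7:ℝ)/4) * (a:ℝ)^((3:ℝ)/4)) := by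
              rw [h5]; ring
          _ = (2*(d:ℝ))^(-(3:ℝ)/4) * ((a:ℝ))⁻¹ := by
              congr 1
              rw [← Real.rpow_add har]
              norm_num
              exact Real.rpow_neg_one _
      calc ∑ a ∈ (Finset.Icc 1 N).filter (fun a => a ≤ K),
          ((a:ℝ)^(-(7:ℝ)/4) * ((max a (2*d/a + 1) : ℕ):ℝ)^(-(3:ℝ)/4))
          ≤ ∑ a ∈ (Finset.Icc 1 N).filter (fun a => a ≤ K),
              ((2*(d:ℝ))^(-(3:ℝ)/4) * ((a:ℝ))⁻¹) := Finset.sum_le_sum point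
        _ ≤ ∑ a ∈ Finset.Icc 1 K, ((2*(d:ℝ))^(-(3:ℝ)/4) * ((a:ℝ))⁻¹) := by
            apply Finset.sum_le_sum_of_subset_of_nonneg
            · intro a ha
              rw [Finset.mem_filter, Finset.mem_Icc] at ha
              rw [Finset.mem_Icc]
              omega
            · intro a _ _
              positivity
        _ = (2*(d:ℝ))^(-(3:ℝ)/4) * ∑ a ∈ Finset.Icc 1 K, ((a:ℝ))⁻¹ := by
            rw [← Finset.mul_sum]
        _ ≤ (2*(d:ℝ))^(-(3:ℝ)/4) * (1 + Real.log (2*d)) := by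
            apply mul_le_mul_of_nonneg_left ?_ (Real.rpow_nonneg h2d0.le _)
            apply le_trans (sum_harmonic _)
            have h4 : Real.log K ≤ Real.log (2*d) := by
              rcases Nat.eq_zero_or_pos K with h | h
              · rw [h]
                simp only [Nat.cast_zero, Real.log_zero]
                apply Real.log_nonneg
                push_cast
                linarith [hd1]
              · exact log_nat_le K d h (by rw [hK]; exact Nat.sqrt_le_self _)
            linarith
    have hbig : ∑ a ∈ (Finset.Icc 1 N).filter (fun a => ¬ (a ≤ K)),
        ((a:ℝ)^(-(7:ℝ)/4) * ((max a (2*d/a + 1) : ℕ):ℝ)^(-(3:ℝ)/4))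
        ≤ 2 * (2*(d:ℝ))^(-(3:ℝ)/4) := by
      have point : ∀ a ∈ (Finset.Icc 1 N).filter (fun a => ¬ (a ≤ K)),
          (a:ℝ)^(-(7:ℝ)/4) * ((max a (2*d/a + 1) : ℕ):ℝ)^(-(3:ℝ)/4)
          ≤ (a:ℝ)^(-(5:ℝ)/2) := by
        intro a hmem
        rw [Finset.mem_filter, Finset.mem_Icc] at hmem
        have ha1 : 0 < a := hmem.1.1
        have har : (0:ℝ) < a := by exact_mod_cast ha1
        have h3 : (a:ℝ) ≤ ((max a (2*d/a + 1) : ℕ):ℝ) := by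
          have : a ≤ max a (2*d/a + 1) := le_max_left _ _
          exact_mod_cast this
        have h4 : ((max a (2*d/a + 1) : ℕ):ℝ)^(-(3:ℝ)/4) ≤ (a:ℝ)^(-(3:ℝ)/4) := by
          rw [show (-(3:ℝ))/4 = -((3:ℝ)/4) by norm_num]
          exact rpow_anti _ _ _ har h3 (by norm_num)
        calc (a:ℝ)^(-(7:ℝ)/4) * ((max a (2*d/a + 1) : ℕ):ℝ)^(-(3:ℝ)/4)
            ≤ (a:ℝ)^(-(7:ℝ)/4) * (a:ℝ)^(-(3:ℝ)/4) := by
              apply mul_le_mul_of_nonneg_left h4 (Real.rpow_nonneg har.le _)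
          _ = (a:ℝ)^(-(5:ℝ)/2) := by
              rw [← Real.rpow_add har]
              norm_num
      calc ∑ a ∈ (Finset.Icc 1 N).filter (fun a => ¬ (a ≤ K)),
          ((a:ℝ)^(-(7:ℝ)/4) * ((max a (2*d/a + 1) : ℕ):ℝ)^(-(3:ℝ)/4))
          ≤ ∑ a ∈ (Finset.Icc 1 N).filter (fun a => ¬ (a ≤ K)), (a:ℝ)^(-(5:ℝ)/2) :=
            Finset.sum_le_sum point
        _ ≤ ∑ a ∈ Finset.Icc (K+1) N, (a:ℝ)^(-(5:ℝ)/2) := by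
            apply Finset.sum_le_sum_of_subset_of_nonneg
            · intro a ha
              rw [Finset.mem_filter, Finset.mem_Icc] at ha
              rw [Finset.mem_Icc]
              omega
            · intro a _ _
              exact Real.rpow_nonneg (Nat.cast_nonneg a) _
        _ ≤ 2 * ((K+1:ℕ):ℝ)^(-(3:ℝ)/2) := sum_five_half (K+1) N (by omega)
        _ ≤ 2 * (2*(d:ℝ))^(-(3:ℝ)/4) := by
            apply mul_le_mul_of_nonneg_left ?_ (by norm_num)
            -- (K+1) ≥ (2d)^(1/2)
            have hsq : 2*d < (K+1)*(K+1) := by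
              have h := Nat.lt_succ_sqrt' (2*d)
              rw [hK]
              simpa [Nat.succ_eq_add_one, pow_two] using h
            have hKr : (0:ℝ) < ((K+1:ℕ):ℝ) := by positivity
            have hu : (2*(d:ℝ))^((1:ℝ)/2) ≤ ((K+1:ℕ):ℝ) := by
              have h6 : ((2*(d:ℝ))^((1:ℝ)/2))^(2:ℕ) = 2*(d:ℝ) := by
                rw [← Real.rpow_natCast ((2*(d:ℝ))^((1:ℝ)/2)) 2, ← Real.rpow_mul h2d0.le]
                norm_num
              have h7 : 2*(d:ℝ) ≤ ((K+1:ℕ):ℝ)^(2:ℕ) := by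
                have := (Nat.cast_le (α := ℝ)).mpr (le_of_lt hsq)
                push_cast at this ⊢
                nlinarith
              nlinarith [Real.rpow_nonneg h2d0.le ((1:ℝ)/2), h6, h7, hKr]
            have h8 : ((K+1:ℕ):ℝ)^(-(3:ℝ)/2) ≤ ((2*(d:ℝ))^((1:ℝ)/2))^(-(3:ℝ)/2) := by
              rw [show (-(3:ℝ))/2 = -((3:ℝ)/2) by norm_num]
              exact rpow_anti _ _ _ (Real.rpow_pos_of_pos h2d0 _) hu (by norm_num)
            apply le_trans h8
            rw [← Real.rpow_mul h2d0.le]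
            norm_num
    -- combine
    have hsum := add_le_add hsmall hbig
    apply le_trans hsum
    apply le_of_eq
    ring
  calc ∑ a ∈ Finset.Icc 1 N, (16*(d:ℝ)*(α^2)⁻¹*(7/3)
        * ((a:ℝ)^(-(7:ℝ)/4) * ((max a (2*d/a + 1) : ℕ):ℝ)^(-(3:ℝ)/4)))
      = 16*(d:ℝ)*(α^2)⁻¹*(7/3) * ∑ a ∈ Finset.Icc 1 N,
          ((a:ℝ)^(-(7:ℝ)/4) * ((max a (2*d/a + 1) : ℕ):ℝ)^(-(3:ℝ)/4)) := by
        rw [← Finset.mul_sum]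
    _ ≤ 16*(d:ℝ)*(α^2)⁻¹*(7/3) * ((2*(d:ℝ))^(-(3:ℝ)/4) * (3 + Real.log (2*d))) := by
        apply mul_le_mul_of_nonneg_left key (by positivity)
lemma card_le_sqrt (n : ℕ) (hn : 0 < n) :
    n.divisors.card ≤ 2 * Nat.sqrt n := by
  have h1 := card_divisors_le n
  have h2 : (n.divisors.filter (fun a => a*a ≤ n)).card ≤ Nat.sqrt n := by
    calc (n.divisors.filter (fun a => a*a ≤ n)).card ≤ (Finset.Icc 1 (Nat.sqrt n)).card := by
          apply Finset.card_le_card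
          intro a ha
          rw [Finset.mem_filter, Nat.mem_divisors] at ha
          rw [Finset.mem_Icc]
          have ha0 : 0 < a := Nat.pos_of_dvd_of_pos ha.1.1 hn
          exact ⟨ha0, by rw [Nat.le_sqrt]; exact ha.2⟩
      _ = Nat.sqrt n := by rw [Nat.card_Icc]; omega
  omega

lemma summable_f (α : ℝ) (hα : 2 ≤ α) (d : ℕ) (hd : 0 < d) :
    Summable (fun n : ℕ => (n.divisors.card : ℝ) * gfun α d n) := by
  have hα0 : (0:ℝ) < α := by linarith
  have hdd : (0:ℝ) < d := by exact_mod_cast hd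
  apply Summable.of_nonneg_of_le
    (f := fun n : ℕ => (36*(d:ℝ)) * (n:ℝ) ^ (-(5:ℝ)/4))
  · intro n
    exact mul_nonneg (Nat.cast_nonneg _) (gfun_nonneg α d n)
  · intro n
    rcases Nat.eq_zero_or_pos n with h0 | hn
    · subst h0
      simp only [Nat.divisors_zero, Finset.card_empty, Nat.cast_zero, zero_mul]
      exact mul_nonneg (by positivity) (Real.rpow_nonneg (by norm_num) _)
    · have hnn : (0:ℝ) < n := by exact_mod_cast hn
      have hcard : (n.divisors.card : ℝ) ≤ 2 * (n:ℝ)^((1:ℝ)/2) := by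
        have h1 := card_le_sqrt n hn
        have h2 : ((Nat.sqrt n : ℕ):ℝ) ≤ (n:ℝ)^((1:ℝ)/2) := by
          have h4 : ((Nat.sqrt n : ℕ):ℝ)^(2:ℕ) ≤ (n:ℝ) := by
            exact_mod_cast Nat.sqrt_le' n
          have h5 : (((Nat.sqrt n : ℕ):ℝ)^(2:ℕ))^((1:ℝ)/2) ≤ (n:ℝ)^((1:ℝ)/2) :=
            Real.rpow_le_rpow (by positivity) h4 (by norm_num)
          calc ((Nat.sqrt n : ℕ):ℝ) = (((Nat.sqrt n : ℕ):ℝ)^(2:ℕ))^((1:ℝ)/2) := by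
                rw [← Real.rpow_natCast ((Nat.sqrt n : ℕ):ℝ) 2, ← Real.rpow_mul (Nat.cast_nonneg _)]
                norm_num
            _ ≤ (n:ℝ)^((1:ℝ)/2) := h5
        calc (n.divisors.card : ℝ) ≤ ((2 * Nat.sqrt n : ℕ):ℝ) := by exact_mod_cast h1
          _ = 2 * ((Nat.sqrt n : ℕ):ℝ) := by push_cast; ring
          _ ≤ 2 * (n:ℝ)^((1:ℝ)/2) := by linarith
      have hgb : gfun α d n ≤ (18*(d:ℝ)) * (n:ℝ)^(-(7:ℝ)/4) := by
        rcases le_or_gt n (2*d) with hle | hgt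
        · -- use trivial bound gfun ≤ n^(-3/4) ≤ 2d * n^(-7/4)
          have h6 : gfun α d n ≤ ((n:ℝ) ^ ((3:ℝ)/4))⁻¹ := by
            rw [gfun]
            split
            · positivity
            · apply mul_le_of_le_one_right (by positivity) (min_le_left _ _)
          apply le_trans h6
          have e7 : ((n:ℝ) ^ ((3:ℝ)/4))⁻¹ = (n:ℝ) * (n:ℝ)^(-(7:ℝ)/4) := by
            rw [← Real.rpow_neg hnn.le, ← Real.rpow_one_add' hnn.le (by norm_num)]
            norm_num
          rw [e7]
          apply mul_le_mul_of_nonneg_right ?_ (Real.rpow_nonneg hnn.le _)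
          have : (n:ℝ) ≤ 2*(d:ℝ) := by exact_mod_cast hle
          linarith
        · have h8 := R3 α hα d n hd hgt
          apply le_trans h8
          apply mul_le_mul_of_nonneg_right ?_ (Real.rpow_nonneg hnn.le _)
          have h9 : (α^2)⁻¹ ≤ 1 := by
            rw [inv_le_one_iff₀]
            right; nlinarith
          nlinarith [hdd]
      calc (n.divisors.card : ℝ) * gfun α d n
          ≤ (2 * (n:ℝ)^((1:ℝ)/2)) * ((18*(d:ℝ)) * (n:ℝ)^(-(7:ℝ)/4)) := by
            apply mul_le_mul hcard hgb (gfun_nonneg α d n) (by positivity)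
        _ = (36*(d:ℝ)) * ((n:ℝ)^((1:ℝ)/2) * (n:ℝ)^(-(7:ℝ)/4)) := by ring
        _ = (36*(d:ℝ)) * (n:ℝ) ^ (-(5:ℝ)/4) := by
            congr 1
            rw [← Real.rpow_add hnn]
            norm_num
  · apply Summable.mul_left
    rw [show (-(5:ℝ))/4 = -((5:ℝ)/4) by norm_num]
    apply Real.summable_nat_rpow.mpr
    norm_num
lemma pairs_le (α : ℝ) (hα : 2 ≤ α) (d : ℕ) (hd : 0 < d) (N : ℕ) :
    ∑ a ∈ Finset.Icc 1 N, ∑ b ∈ Finset.Icc a N, gfun α d (a*b)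
    ≤ 64 * (α^2)⁻¹ * (d:ℝ)^((1:ℝ)/4) * (1 + Real.log (2*d))
      + (4*(d:ℝ)^(-(3:ℝ)/4) * min 1 ((3*(d:ℝ)/α)^2) * ((Nat.sqrt (2*d):ℕ):ℝ)
        + 12*(d:ℝ)^(-(3:ℝ)/4) * (3*(d:ℝ)/α) * (1 + Real.log (2*d)))
      + 16*(d:ℝ)*(α^2)⁻¹*(7/3) * ((2*(d:ℝ))^(-(3:ℝ)/4) * (3 + Real.log (2*d))) := by
  classical
  have hα0 : (0:ℝ) < α := by linarith
  have hdd : (0:ℝ) < d := by exact_mod_cast hd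
  set Q := (Finset.Icc 1 N).sigma (fun a => Finset.Icc a N) with hQ
  set H1 : (_ : ℕ) × ℕ → ℝ := fun x => if 2*(x.1*x.2) ≤ d then
      (16*(α^2)⁻¹ * ((x.1:ℝ)^(-(3:ℝ)/4) * (x.2:ℝ)^(-(3:ℝ)/4))) else 0 with hH1
  set H2 : (_ : ℕ) × ℕ → ℝ := fun x => if d < 2*(x.1*x.2) ∧ x.1*x.2 ≤ 2*d then
      (2*(d:ℝ)^(-(3:ℝ)/4) * min 1 ((3*(d:ℝ)/α)^2 / (((x.1*x.2:ℕ):ℝ) - ((d:ℕ):ℝ))^2)) else 0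
      with hH2
  set H3 : (_ : ℕ) × ℕ → ℝ := fun x => if 2*d < x.1*x.2 then
      (16*(d:ℝ)*(α^2)⁻¹ * ((x.1:ℝ)^(-(7:ℝ)/4) * (x.2:ℝ)^(-(7:ℝ)/4))) else 0 with hH3
  have point : ∀ x ∈ Q, gfun α d (x.1*x.2) ≤ H1 x + H2 x + H3 x := by
    intro x hx
    rw [hQ, Finset.mem_sigma, Finset.mem_Icc, Finset.mem_Icc] at hx
    obtain ⟨⟨ha1, haN⟩, hab, hbN⟩ := hx
    have hn : 0 < x.1*x.2 := Nat.mul_pos (by omega) (by omega)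
    have hb1 : 0 < x.2 := by omega
    have hcast : ((x.1*x.2:ℕ):ℝ) = (x.1:ℝ)*(x.2:ℝ) := by push_cast; ring
    rcases le_or_gt (2*(x.1*x.2)) d with hc1 | hc1
    · -- region 1
      have e1 : H1 x = 16*(α^2)⁻¹ * ((x.1:ℝ)^(-(3:ℝ)/4) * (x.2:ℝ)^(-(3:ℝ)/4)) := by
        rw [hH1]; exact if_pos hc1
      have e2 : H2 x = 0 := by rw [hH2]; apply if_neg; omega
      have e3 : H3 x = 0 := by rw [hH3]; apply if_neg; omega
      rw [e1, e2, e3, add_zero, add_zero]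
      have h4 := R1 α hα d (x.1*x.2) hn hc1
      apply le_trans h4
      apply le_of_eq
      congr 1
      rw [hcast, Real.mul_rpow (Nat.cast_nonneg _) (Nat.cast_nonneg _)]
    · rcases le_or_gt (x.1*x.2) (2*d) with hc2 | hc2
      · -- region 2
        have e1 : H1 x = 0 := by rw [hH1]; apply if_neg; omega
        have e2 : H2 x = 2*(d:ℝ)^(-(3:ℝ)/4)
            * min 1 ((3*(d:ℝ)/α)^2 / (((x.1*x.2:ℕ):ℝ) - ((d:ℕ):ℝ))^2) := by
          rw [hH2]; exact if_pos ⟨hc1, hc2⟩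
        have e3 : H3 x = 0 := by rw [hH3]; apply if_neg; omega
        rw [e1, e2, e3, zero_add, add_zero]
        exact R2 α hα d (x.1*x.2) hd hn hc1 hc2
      · -- region 3
        have e1 : H1 x = 0 := by rw [hH1]; apply if_neg; omega
        have e2 : H2 x = 0 := by rw [hH2]; apply if_neg; omega
        have e3 : H3 x = 16*(d:ℝ)*(α^2)⁻¹ * ((x.1:ℝ)^(-(7:ℝ)/4) * (x.2:ℝ)^(-(7:ℝ)/4)) := by
          rw [hH3]; exact if_pos hc2
        rw [e1, e2, e3, zero_add, zero_add]
        have h4 := R3 α hα d (x.1*x.2) hd hc2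
        apply le_trans h4
        apply le_of_eq
        congr 1
        rw [hcast, Real.mul_rpow (Nat.cast_nonneg _) (Nat.cast_nonneg _)]
  calc ∑ a ∈ Finset.Icc 1 N, ∑ b ∈ Finset.Icc a N, gfun α d (a*b)
      = ∑ x ∈ Q, gfun α d (x.1*x.2) := by
        rw [hQ, Finset.sum_sigma']
    _ ≤ ∑ x ∈ Q, (H1 x + H2 x + H3 x) := Finset.sum_le_sum point
    _ = ∑ x ∈ Q, H1 x + ∑ x ∈ Q, H2 x + ∑ x ∈ Q, H3 x := by
        rw [Finset.sum_add_distrib, Finset.sum_add_distrib]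
    _ ≤ _ := by
        apply add_le_add (add_le_add ?_ ?_) ?_
        · rw [hH1, Finset.sum_ite, Finset.sum_const_zero, add_zero]
          exact region1_le α hα d N hd
        · rw [hH2, Finset.sum_ite, Finset.sum_const_zero, add_zero]
          exact region2_le α hα d N hd
        · rw [hH3, Finset.sum_ite, Finset.sum_const_zero, add_zero]
          exact region3_le α hα d N hd
lemma rpow_third_le (x y : ℝ) (hx : 0 ≤ x) (hy : 0 ≤ y) (h : x ≤ y^3) : x^((1:ℝ)/3) ≤ y := by
  have h1 : x^((1:ℝ)/3) ≤ (y^3)^((1:ℝ)/3) := Real.rpow_le_rpow hx h (by norm_num)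
  apply le_trans h1
  rw [← Real.rpow_natCast y 3, ← Real.rpow_mul hy]
  norm_num

lemma final_numeric (α : ℝ) (hα : 2 ≤ α) (d : ℕ) (hd : 0 < d) :
    64 * (α^2)⁻¹ * (d:ℝ)^((1:ℝ)/4) * (1 + Real.log (2*d))
      + (4*(d:ℝ)^(-(3:ℝ)/4) * min 1 ((3*(d:ℝ)/α)^2) * ((Nat.sqrt (2*d):ℕ):ℝ)
        + 12*(d:ℝ)^(-(3:ℝ)/4) * (3*(d:ℝ)/α) * (1 + Real.log (2*d)))
      + 16*(d:ℝ)*(α^2)⁻¹*(7/3) * ((2*(d:ℝ))^(-(3:ℝ)/4) * (3 + Real.log (2*d)))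
    ≤ 5000 * α ^ (-(1:ℝ)/3) * (d:ℝ)^((1:ℝ)/4) * Real.log (2*(d:ℝ)) := by
  have hα0 : (0:ℝ) < α := by linarith
  have hα1 : (1:ℝ) ≤ α := by linarith
  have hdd : (0:ℝ) < d := by exact_mod_cast hd
  have hd1 : (1:ℝ) ≤ d := by exact_mod_cast hd
  set L : ℝ := Real.log (2*(d:ℝ)) with hLdef
  set A : ℝ := α ^ (-(1:ℝ)/3) with hAdef
  set P : ℝ := (d:ℝ)^((1:ℝ)/4) with hPdef
  set Pm : ℝ := (d:ℝ)^(-(3:ℝ)/4) with hPmdef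
  have hA0 : 0 < A := Real.rpow_pos_of_pos hα0 _
  have hP0 : 0 < P := Real.rpow_pos_of_pos hdd _
  have hPm0 : 0 < Pm := Real.rpow_pos_of_pos hdd _
  have hL : ((69:ℝ)/100) ≤ L := by
    rw [hLdef]
    have h1 : Real.log 2 ≤ Real.log (2*(d:ℝ)) := Real.log_le_log (by norm_num) (by linarith)
    have h2 := Real.log_two_gt_d9
    linarith
  have f1 : (α^2)⁻¹ ≤ A := by
    have e : (α^2)⁻¹ = α ^ ((-2):ℝ) := by
      rw [show ((-2):ℝ) = -((2:ℕ):ℝ) by norm_num, Real.rpow_neg hα0.le, Real.rpow_natCast]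
    rw [e, hAdef]
    exact Real.rpow_le_rpow_of_exponent_le hα1 (by norm_num)
  have f2 : α⁻¹ ≤ A := by
    have e : α⁻¹ = α ^ ((-1):ℝ) := (Real.rpow_neg_one α).symm
    rw [e, hAdef]
    exact Real.rpow_le_rpow_of_exponent_le hα1 (by norm_num)
  have g1 : Pm * (d:ℝ) = P := by
    rw [hPmdef, hPdef]
    have := Real.rpow_add hdd (-(3:ℝ)/4) 1
    rw [Real.rpow_one] at this
    rw [← this]
    norm_num
  have g2 : (2*(d:ℝ))^(-(3:ℝ)/4) ≤ Pm := by
    rw [hPmdef, show (-(3:ℝ))/4 = -((3:ℝ)/4) by norm_num]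
    exact rpow_anti _ _ _ hdd (by linarith) (by norm_num)
  -- T1
  have hT1 : 64 * (α^2)⁻¹ * P * (1 + L) ≤ 160*(A*P*L) := by
    have h1 : (α^2)⁻¹ * (1+L) ≤ A * ((5/2)*L) := by
      apply mul_le_mul f1 (by linarith) (by linarith) hA0.le
    calc 64 * (α^2)⁻¹ * P * (1 + L) = 64*P*((α^2)⁻¹*(1+L)) := by ring
      _ ≤ 64*P*(A*((5/2)*L)) := by
          apply mul_le_mul_of_nonneg_left h1 (by positivity)
      _ = 160*(A*P*L) := by ring
  -- T2a
  have hmin : min 1 ((3*(d:ℝ)/α)^2) ≤ 2*(d:ℝ)^((1:ℝ)/3)*A := by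
    have h1 := min_le_rpow_sixth (x := (3*(d:ℝ)/α)^2) (by positivity)
    apply le_trans h1
    have e6 : ((3*(d:ℝ)/α)^2)^((1:ℝ)/6) = (3*(d:ℝ)/α)^((1:ℝ)/3) := by
      rw [← Real.rpow_natCast (3*(d:ℝ)/α) 2, ← Real.rpow_mul (by positivity)]
      norm_num
    rw [e6]
    have e7 : (3*(d:ℝ)/α)^((1:ℝ)/3) = (3*(d:ℝ))^((1:ℝ)/3) * (α^((1:ℝ)/3))⁻¹ := by
      rw [Real.div_rpow (by positivity) hα0.le, div_eq_mul_inv]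
    rw [e7]
    have h8 : (3*(d:ℝ))^((1:ℝ)/3) ≤ 2*(d:ℝ)^((1:ℝ)/3) := by
      apply rpow_third_le _ _ (by positivity) (by positivity)
      have h9 : ((d:ℝ)^((1:ℝ)/3))^(3:ℕ) = (d:ℝ) := by
        rw [← Real.rpow_natCast ((d:ℝ)^((1:ℝ)/3)) 3, ← Real.rpow_mul hdd.le]
        norm_num
      push_cast
      nlinarith [h9, Real.rpow_nonneg hdd.le ((1:ℝ)/3), hd1]
    have h10 : (α^((1:ℝ)/3))⁻¹ = A := by
      rw [hAdef, show (-(1:ℝ))/3 = -((1:ℝ)/3) by norm_num, Real.rpow_neg hα0.le]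
    rw [h10]
    apply mul_le_mul_of_nonneg_right h8 hA0.le
  have hK2 : ((Nat.sqrt (2*d):ℕ):ℝ) ≤ 2*(d:ℝ)^((1:ℝ)/2) := by
    have h4 : ((Nat.sqrt (2*d) : ℕ):ℝ)^(2:ℕ) ≤ 2*(d:ℝ) := by
      exact_mod_cast Nat.sqrt_le' (2*d)
    have h5 : ((Nat.sqrt (2*d) : ℕ):ℝ) ≤ (2*(d:ℝ))^((1:ℝ)/2) := by
      have h6 : (((Nat.sqrt (2*d) : ℕ):ℝ)^(2:ℕ))^((1:ℝ)/2) ≤ (2*(d:ℝ))^((1:ℝ)/2) :=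
        Real.rpow_le_rpow (by positivity) h4 (by norm_num)
      calc ((Nat.sqrt (2*d) : ℕ):ℝ) = (((Nat.sqrt (2*d) : ℕ):ℝ)^(2:ℕ))^((1:ℝ)/2) := by
            rw [← Real.rpow_natCast ((Nat.sqrt (2*d) : ℕ):ℝ) 2,
              ← Real.rpow_mul (Nat.cast_nonneg _)]
            norm_num
        _ ≤ (2*(d:ℝ))^((1:ℝ)/2) := h6
    apply le_trans h5
    have e8 : (2*(d:ℝ))^((1:ℝ)/2) = 2^((1:ℝ)/2) * (d:ℝ)^((1:ℝ)/2) :=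
      Real.mul_rpow (by norm_num) hdd.le
    rw [e8]
    apply mul_le_mul_of_nonneg_right ?_ (Real.rpow_nonneg hdd.le _)
    calc (2:ℝ)^((1:ℝ)/2) ≤ (2:ℝ)^(1:ℝ) :=
          Real.rpow_le_rpow_of_exponent_le (by norm_num) (by norm_num)
      _ = 2 := Real.rpow_one 2
  have hcomb : Pm * ((d:ℝ)^((1:ℝ)/3) * (d:ℝ)^((1:ℝ)/2)) ≤ P := by
    rw [hPmdef, hPdef, ← Real.rpow_add hdd, ← Real.rpow_add hdd]
    apply Real.rpow_le_rpow_of_exponent_le hd1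
    norm_num
  have hT2a : 4*Pm * min 1 ((3*(d:ℝ)/α)^2) * ((Nat.sqrt (2*d):ℕ):ℝ) ≤ 24*(A*P*L) := by
    have hmin0 : (0:ℝ) ≤ min 1 ((3*(d:ℝ)/α)^2) := le_min (by norm_num) (by positivity)
    have step : Pm * min 1 ((3*(d:ℝ)/α)^2) * ((Nat.sqrt (2*d):ℕ):ℝ)
        ≤ Pm * (2*(d:ℝ)^((1:ℝ)/3)*A) * (2*(d:ℝ)^((1:ℝ)/2)) := by
      apply mul_le_mul ?_ hK2 (Nat.cast_nonneg _) (by positivity)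
      exact mul_le_mul_of_nonneg_left hmin (by positivity)
    have step2 : Pm * (2*(d:ℝ)^((1:ℝ)/3)*A) * (2*(d:ℝ)^((1:ℝ)/2))
        = 4*A*(Pm * ((d:ℝ)^((1:ℝ)/3) * (d:ℝ)^((1:ℝ)/2))) := by ring
    have step3 : 4*A*(Pm * ((d:ℝ)^((1:ℝ)/3) * (d:ℝ)^((1:ℝ)/2))) ≤ 4*A*P := by
      apply mul_le_mul_of_nonneg_left hcomb (by positivity)
    have happly : (A*P)*((69:ℝ)/100) ≤ (A*P)*L :=
      mul_le_mul_of_nonneg_left hL (by positivity)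
    have c1 : Pm * min 1 ((3*(d:ℝ)/α)^2) * ((Nat.sqrt (2*d):ℕ):ℝ) ≤ 4*(A*P) := by
      calc Pm * min 1 ((3*(d:ℝ)/α)^2) * ((Nat.sqrt (2*d):ℕ):ℝ)
          ≤ Pm * (2*(d:ℝ)^((1:ℝ)/3)*A) * (2*(d:ℝ)^((1:ℝ)/2)) := step
        _ = 4*A*(Pm * ((d:ℝ)^((1:ℝ)/3) * (d:ℝ)^((1:ℝ)/2))) := step2
        _ ≤ 4*A*P := step3
        _ = 4*(A*P) := by ring
    linarith [c1, happly, mul_pos hA0 hP0]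
  have hT2b : 12*Pm * (3*(d:ℝ)/α) * (1 + L) ≤ 90*(A*P*L) := by
    have e9 : 12*Pm * (3*(d:ℝ)/α) * (1 + L) = 36*(Pm*(d:ℝ))*(α⁻¹*(1+L)) := by
      rw [div_eq_mul_inv]; ring
    rw [e9, g1]
    have h1 : α⁻¹ * (1+L) ≤ A * ((5/2)*L) := by
      apply mul_le_mul f2 (by linarith) (by linarith) hA0.le
    calc 36*P*(α⁻¹*(1+L)) ≤ 36*P*(A*((5/2)*L)) := by
          apply mul_le_mul_of_nonneg_left h1 (by positivity)
      _ = 90*(A*P*L) := by ring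
  have hT3 : 16*(d:ℝ)*(α^2)⁻¹*(7/3) * ((2*(d:ℝ))^(-(3:ℝ)/4) * (3 + L)) ≤ 220*(A*P*L) := by
    have h1 : (2*(d:ℝ))^(-(3:ℝ)/4) * (3+L) ≤ Pm * ((27/5)*L) := by
      apply mul_le_mul g2 (by linarith) (by linarith) hPm0.le
    have h2 : (α^2)⁻¹ ≤ A := f1
    calc 16*(d:ℝ)*(α^2)⁻¹*(7/3) * ((2*(d:ℝ))^(-(3:ℝ)/4) * (3 + L))
        ≤ 16*(d:ℝ)*(α^2)⁻¹*(7/3) * (Pm * ((27/5)*L)) := by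
          apply mul_le_mul_of_nonneg_left h1 (by positivity)
      _ = (112/3)*(27/5)*((α^2)⁻¹*L)*(Pm*(d:ℝ)) := by ring
      _ = (112/3)*(27/5)*((α^2)⁻¹*L)*P := by rw [g1]
      _ ≤ (112/3)*(27/5)*(A*L)*P := by
          apply mul_le_mul_of_nonneg_right ?_ hP0.le
          apply mul_le_mul_of_nonneg_left ?_ (by norm_num)
          apply mul_le_mul_of_nonneg_right f1 (by linarith)
      _ ≤ 220*(A*P*L) := by
          have hM : (0:ℝ) ≤ A*L*P := by positivity
          nlinarith [hM]
  have hgoal : 5000 * α ^ (-(1:ℝ)/3) * (d:ℝ)^((1:ℝ)/4) * Real.log (2*(d:ℝ)) = 5000*(A*P*L) := by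
    rw [hAdef, hPdef, hLdef]; ring
  rw [hgoal]
  have hfin : (0:ℝ) ≤ A*P*L := by positivity
  linarith [hT1, hT2a, hT2b, hT3]
theorem offdiagonal_divisor_sum_bound :
    ∃ C > (0 : ℝ), ∀ α : ℝ, 2 ≤ α → ∀ d : ℕ, Squarefree d →
      ∑' n : ℕ, (if n = 0 ∨ n = d then 0 else
          (n.divisors.card : ℝ) / (n : ℝ) ^ ((3 : ℝ) / 4) *
            min 1 ((d : ℝ) / (α ^ 2 * (Real.sqrt n - Real.sqrt d) ^ 2)))
        ≤ C * α ^ (-(1 : ℝ) / 3) * (d : ℝ) ^ ((1 : ℝ) / 4) * Real.log (2 * d) := by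
  refine ⟨10000, by norm_num, ?_⟩
  intro α hα d hsqf
  have hd : 0 < d := Nat.pos_of_ne_zero hsqf.ne_zero
  have heq : ∀ n : ℕ, (if n = 0 ∨ n = d then 0 else
      (n.divisors.card : ℝ) / (n : ℝ) ^ ((3 : ℝ) / 4) *
        min 1 ((d : ℝ) / (α ^ 2 * (Real.sqrt n - Real.sqrt d) ^ 2)))
      = (n.divisors.card : ℝ) * gfun α d n := by
    intro n
    rw [gfun]
    split
    · simp
    · rw [div_eq_mul_inv]; ring
  rw [tsum_congr heq]
  apply Summable.tsum_le_of_sum_range_le (summable_f α hα d hd)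
  intro N
  have h1 := partial_le_pairs α d N
  have h2 := pairs_le α hα d hd N
  have h3 := final_numeric α hα d hd
  have h4 : ∑ a ∈ Finset.Icc 1 N, ∑ b ∈ Finset.Icc a N, gfun α d (a*b)
      ≤ 5000 * α ^ (-(1:ℝ)/3) * (d:ℝ)^((1:ℝ)/4) * Real.log (2*(d:ℝ)) :=
    le_trans h2 h3
  calc ∑ n ∈ Finset.range N, (n.divisors.card : ℝ) * gfun α d n
      ≤ 2 * ∑ a ∈ Finset.Icc 1 N, ∑ b ∈ Finset.Icc a N, gfun α d (a*b) := h1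
    _ ≤ 2 * (5000 * α ^ (-(1:ℝ)/3) * (d:ℝ)^((1:ℝ)/4) * Real.log (2*(d:ℝ))) := by
        apply mul_le_mul_of_nonneg_left h4 (by norm_num)
    _ = 10000 * α ^ (-(1:ℝ)/3) * (d:ℝ)^((1:ℝ)/4) * Real.log (2*(d:ℝ)) := by ring
end
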